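/- arXiv:1908.07426 — 5 statements merged into one kernel-verified Lean document; each statement's English description precedes it below -/
import Mathlib

section
/- There is no isometry U : H_I → H_A ⊗ H_B with dim H_I = d ≥ 2 such that both partial traces Tr_B(UρU†) and Tr_A(UρU†) are constant (independent of the input density matrix ρ). (No-masking theorem for isometries.) -/
open Matrix Complex BigOperators
open scoped Kronecker ComplexOrder

noncomputable section

/-- von Neumann entropy (natural logarithm) via eigenvalues, when Hermitian. -/
def vNE {n : Type*} [Fintype n] [DecidableEq n] (ρ : Matrix n n ℂ) : ℝ :=
  if h : ρ.IsHermitian then ∑ i, Real.negMulLog (h.eigenvalues i) else 0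

/-- density matrix -/
def IsDensity {n : Type*} [Fintype n] (ρ : Matrix n n ℂ) : Prop :=
  ρ.PosSemidef ∧ ρ.trace = 1

/-- rank-one projector |ψ⟩⟨ψ| -/
def pureState {n : Type*} (ψ : n → ℂ) : Matrix n n ℂ :=
  fun i j => ψ i * star (ψ j)

/-- partial trace over the second tensor factor -/
def ptrB {a b : Type*} [Fintype b] (M : Matrix (a × b) (a × b) ℂ) : Matrix a a ℂ :=
  fun i j => ∑ k, M (i, k) (j, k)

/-- partial trace over the first tensor factor -/
def ptrA {a b : Type*} [Fintype a] (M : Matrix (a × b) (a × b) ℂ) : Matrix b b ℂ :=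
  fun i j => ∑ k, M (k, i) (k, j)

/-- marginal on R of a tripartite state on R ⊗ A ⊗ B -/
def margR {R A B : Type*} [Fintype A] [Fintype B]
    (τ : Matrix (R × A × B) (R × A × B) ℂ) : Matrix R R ℂ :=
  fun i j => ∑ a, ∑ b, τ (i, a, b) (j, a, b)

/-- marginal on A -/
def margA {R A B : Type*} [Fintype R] [Fintype B]
    (τ : Matrix (R × A × B) (R × A × B) ℂ) : Matrix A A ℂ :=
  fun i j => ∑ r, ∑ b, τ (r, i, b) (r, j, b)

/-- marginal on B -/
def margB {R A B : Type*} [Fintype R] [Fintype A]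
    (τ : Matrix (R × A × B) (R × A × B) ℂ) : Matrix B B ℂ :=
  fun i j => ∑ r, ∑ a, τ (r, a, i) (r, a, j)

/-- marginal on R ⊗ A -/
def margRA {R A B : Type*} [Fintype B]
    (τ : Matrix (R × A × B) (R × A × B) ℂ) : Matrix (R × A) (R × A) ℂ :=
  fun p q => ∑ b, τ (p.1, p.2, b) (q.1, q.2, b)

/-- marginal on R ⊗ B -/
def margRB {R A B : Type*} [Fintype A]
    (τ : Matrix (R × A × B) (R × A × B) ℂ) : Matrix (R × B) (R × B) ℂ :=
  fun p q => ∑ a, τ (p.1, a, p.2) (q.1, a, q.2)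

/-- quantum mutual information I(R:A) = S(R) + S(A) - S(RA) -/
def IRA {R A B : Type*} [Fintype R] [Fintype A] [Fintype B]
    [DecidableEq R] [DecidableEq A]
    (τ : Matrix (R × A × B) (R × A × B) ℂ) : ℝ :=
  vNE (margR τ) + vNE (margA τ) - vNE (margRA τ)

/-- quantum mutual information I(R:B) = S(R) + S(B) - S(RB) -/
def IRB {R A B : Type*} [Fintype R] [Fintype A] [Fintype B]
    [DecidableEq R] [DecidableEq B]
    (τ : Matrix (R × A × B) (R × A × B) ℂ) : ℝ :=
  vNE (margR τ) + vNE (margB τ) - vNE (margRB τ)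

end

noncomputable section

def nmOuter {n : Type*} (ψ φ : n → ℂ) : Matrix n n ℂ :=
  fun i j => ψ i * star (φ j)

lemma nm_conj_outer {m n : Type*} [Fintype n] (U : Matrix m n ℂ) (ψ φ : n → ℂ) :
    U * nmOuter ψ φ * Uᴴ = nmOuter (U.mulVec ψ) (U.mulVec φ) := by
  ext p q
  simp only [Matrix.mul_apply, Matrix.conjTranspose_apply, nmOuter, Matrix.mulVec,
    dotProduct, star_sum, star_mul', Finset.sum_mul, Finset.mul_sum]
  exact Finset.sum_congr rfl fun j _ => Finset.sum_congr rfl fun i _ => by ring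

lemma nm_psd {n : Type*} [Fintype n] (ψ : n → ℂ) : (pureState ψ).PosSemidef := by
  refine Matrix.PosSemidef.of_dotProduct_mulVec_nonneg ?_ ?_
  · ext i j
    simp only [Matrix.conjTranspose_apply, pureState, star_mul', star_star]
    ring
  · intro x
    have : dotProduct (star x) ((pureState ψ) *ᵥ x)
        = (∑ i, ψ i * star (x i)) * star (∑ i, ψ i * star (x i)) := by
      simp only [dotProduct, Matrix.mulVec, pureState, Pi.star_apply,
        star_sum, star_mul', star_star, Finset.mul_sum, Finset.sum_mul]
      rw [Finset.sum_comm]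
      exact Finset.sum_congr rfl fun j _ => Finset.sum_congr rfl fun i _ => by ring
    rw [this]
    exact mul_star_self_nonneg _

lemma nm_ptrB_add {a b : Type*} [Fintype b] (M N : Matrix (a × b) (a × b) ℂ) :
    ptrB (M + N) = ptrB M + ptrB N := by
  ext i j; simp [ptrB, Finset.sum_add_distrib]

lemma nm_ptrB_sub {a b : Type*} [Fintype b] (M N : Matrix (a × b) (a × b) ℂ) :
    ptrB (M - N) = ptrB M - ptrB N := by
  ext i j; simp [ptrB, Finset.sum_sub_distrib]

lemma nm_ptrB_smul {a b : Type*} [Fintype b] (c : ℂ) (M : Matrix (a × b) (a × b) ℂ) :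
    ptrB (c • M) = c • ptrB M := by
  ext i j; simp [ptrB, Finset.mul_sum]

lemma nm_ptrA_add {a b : Type*} [Fintype a] (M N : Matrix (a × b) (a × b) ℂ) :
    ptrA (M + N) = ptrA M + ptrA N := by
  ext i j; simp [ptrA, Finset.sum_add_distrib]

lemma nm_ptrA_sub {a b : Type*} [Fintype a] (M N : Matrix (a × b) (a × b) ℂ) :
    ptrA (M - N) = ptrA M - ptrA N := by
  ext i j; simp [ptrA, Finset.sum_sub_distrib]

lemma nm_ptrA_smul {a b : Type*} [Fintype a] (c : ℂ) (M : Matrix (a × b) (a × b) ℂ) :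
    ptrA (c • M) = c • ptrA M := by
  ext i j; simp [ptrA, Finset.mul_sum]

end

/-- No-masking theorem for isometries: no isometry U : H_I → H_A ⊗ H_B
(dim H_I = d ≥ 2) has both partial traces constant on density matrices. -/
theorem no_masking_isometry
    {A B : Type*} [Fintype A] [Fintype B] [DecidableEq A] [DecidableEq B]
    (d : ℕ) (hd : 2 ≤ d)
    (U : Matrix (A × B) (Fin d) ℂ) (hU : Uᴴ * U = 1) :
    ¬ ∃ (σA : Matrix A A ℂ) (σB : Matrix B B ℂ),
        ∀ ρ : Matrix (Fin d) (Fin d) ℂ, IsDensity ρ →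
          ptrB (U * ρ * Uᴴ) = σA ∧ ptrA (U * ρ * Uᴴ) = σB := by
  rintro ⟨σA, σB, h⟩
  set i0 : Fin d := ⟨0, by omega⟩ with hi0
  set i1 : Fin d := ⟨1, by omega⟩ with hi1
  have hne : i0 ≠ i1 := by simp [hi0, hi1, Fin.ext_iff]
  set e0 : Fin d → ℂ := fun j => if j = i0 then 1 else 0 with he0
  set e1 : Fin d → ℂ := fun j => if j = i1 then 1 else 0 with he1
  set ψp : Fin d → ℂ := fun j => (3/5 : ℂ) * e0 j + (4/5 : ℂ) * e1 j with hψp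
  set ψi : Fin d → ℂ := fun j => (3/5 : ℂ) * e0 j + (4/5 : ℂ) * Complex.I * e1 j with hψi
  -- density facts
  have htr : ∀ (a b : ℂ), a * star a + b * star b = 1 →
      (pureState (fun j => a * e0 j + b * e1 j)).trace = 1 := by
    intro a b hab
    have hterm : ∀ j : Fin d, (a * e0 j + b * e1 j) * star (a * e0 j + b * e1 j)
        = (a * star a) * e0 j + (b * star b) * e1 j := by
      intro j
      by_cases h0 : j = i0 <;> by_cases h1 : j = i1
      · exact absurd (h0.symm.trans h1) hne
      all_goals simp [he0, he1, h0, h1, hne, Ne.symm hne] <;> try ring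
    have : (pureState (fun j => a * e0 j + b * e1 j)).trace
        = ∑ j, ((a * star a) * e0 j + (b * star b) * e1 j) := by
      apply Finset.sum_congr rfl fun j _ => hterm j
    rw [this, Finset.sum_add_distrib, ← Finset.mul_sum, ← Finset.mul_sum]
    simp only [he0, he1, Finset.sum_ite_eq', Finset.mem_univ, if_true, mul_one]
    exact hab
  have hden : ∀ (a b : ℂ), a * star a + b * star b = 1 →
      IsDensity (pureState (fun j => a * e0 j + b * e1 j)) := by
    intro a b hab
    exact ⟨nm_psd _, htr a b hab⟩
  have hd0 : IsDensity (pureState e0) := by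
    have h' : (fun j => (1:ℂ) * e0 j + (0:ℂ) * e1 j) = e0 := by funext j; simp
    have := hden 1 0 (by simp)
    rwa [h'] at this
  have hd1 : IsDensity (pureState e1) := by
    have h' : (fun j => (0:ℂ) * e0 j + (1:ℂ) * e1 j) = e1 := by funext j; simp
    have := hden 0 1 (by simp)
    rwa [h'] at this
  have hdp : IsDensity (pureState ψp) := by
    have : ((3:ℂ)/5) * star ((3:ℂ)/5) + ((4:ℂ)/5) * star ((4:ℂ)/5) = 1 := by
      simp [Complex.star_def, map_div₀, map_ofNat]
      norm_num
    have := hden (3/5) (4/5) this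
    rwa [hψp]
  have hdi : IsDensity (pureState ψi) := by
    have hnorm : ((3:ℂ)/5) * star ((3:ℂ)/5)
        + ((4:ℂ)/5 * Complex.I) * star ((4:ℂ)/5 * Complex.I) = 1 := by
      simp only [Complex.star_def, map_div₀, map_ofNat, _root_.map_mul, Complex.conj_I]
      ring_nf
      rw [Complex.I_sq]
      ring
    have := hden (3/5) ((4/5) * Complex.I) hnorm
    rwa [hψi]
  obtain ⟨h0A, h0B⟩ := h _ hd0
  obtain ⟨h1A, h1B⟩ := h _ hd1
  obtain ⟨hpA, hpB⟩ := h _ hdp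
  obtain ⟨hiA, hiB⟩ := h _ hdi
  -- the key matrix identity
  have hM : pureState ψp + Complex.I • pureState ψi
      - ((9/25 : ℂ) * (1 + Complex.I)) • pureState e0
      - ((16/25 : ℂ) * (1 + Complex.I)) • pureState e1
      = (24/25 : ℂ) • nmOuter e0 e1 := by
    have hI3 : (Complex.I)^3 = -Complex.I := by rw [pow_succ, Complex.I_sq]; ring
    ext i j
    simp only [pureState, nmOuter, hψp, hψi, Matrix.sub_apply, Matrix.add_apply,
      Matrix.smul_apply, smul_eq_mul]
    by_cases h0 : i = i0 <;> by_cases h1 : i = i1 <;>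
      by_cases g0 : j = i0 <;> by_cases g1 : j = i1
    · exact absurd (h0.symm.trans h1) hne
    · exact absurd (h0.symm.trans h1) hne
    · exact absurd (h0.symm.trans h1) hne
    · exact absurd (h0.symm.trans h1) hne
    all_goals try exact absurd (g0.symm.trans g1) hne
    all_goals try simp only [he0, he1, h0, h1, g0, g1, hne, Ne.symm hne, if_true, if_false,
          Complex.star_def, _root_.map_add, _root_.map_mul, _root_.map_div₀,
          _root_.map_ofNat, _root_.map_one, _root_.map_zero, Complex.conj_I]
    all_goals try simp [hne, Ne.symm hne]
    all_goals try ring1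
    all_goals (try ring_nf; try simp [hI3, Complex.I_sq]; try ring1)
    all_goals (try ring_nf; try simp [hI3, Complex.I_sq]; try ring1)
  -- linearity consequences
  have hEB : ptrB (U * nmOuter e0 e1 * Uᴴ) = 0 := by
    have key : (24/25 : ℂ) • ptrB (U * nmOuter e0 e1 * Uᴴ)
        = σA + Complex.I • σA - ((9/25 : ℂ) * (1 + Complex.I)) • σA
          - ((16/25 : ℂ) * (1 + Complex.I)) • σA := by
      rw [← nm_ptrB_smul, ← Matrix.smul_mul, ← Matrix.mul_smul, ← hM]
      simp only [Matrix.mul_sub, Matrix.sub_mul, Matrix.mul_add, Matrix.add_mul,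
        Matrix.mul_smul, Matrix.smul_mul, nm_ptrB_sub, nm_ptrB_add, nm_ptrB_smul]
      rw [hpA, hiA, h0A, h1A]
    have hz : σA + Complex.I • σA - ((9/25 : ℂ) * (1 + Complex.I)) • σA
        - ((16/25 : ℂ) * (1 + Complex.I)) • σA = 0 := by
      have : σA + Complex.I • σA - ((9/25 : ℂ) * (1 + Complex.I)) • σA
          - ((16/25 : ℂ) * (1 + Complex.I)) • σA
          = ((1 + Complex.I - (9/25 : ℂ) * (1 + Complex.I)
            - (16/25 : ℂ) * (1 + Complex.I))) • σA := by module
      rw [this, show (1 + Complex.I - (9/25 : ℂ) * (1 + Complex.I)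
            - (16/25 : ℂ) * (1 + Complex.I)) = 0 by ring, zero_smul]
    rw [hz] at key
    have h24 : (24/25 : ℂ) ≠ 0 := by norm_num
    exact (smul_eq_zero.mp key).resolve_left h24
  have hEA : ptrA (U * nmOuter e0 e1 * Uᴴ) = 0 := by
    have key : (24/25 : ℂ) • ptrA (U * nmOuter e0 e1 * Uᴴ)
        = σB + Complex.I • σB - ((9/25 : ℂ) * (1 + Complex.I)) • σB
          - ((16/25 : ℂ) * (1 + Complex.I)) • σB := by
      rw [← nm_ptrA_smul, ← Matrix.smul_mul, ← Matrix.mul_smul, ← hM]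
      simp only [Matrix.mul_sub, Matrix.sub_mul, Matrix.mul_add, Matrix.add_mul,
        Matrix.mul_smul, Matrix.smul_mul, nm_ptrA_sub, nm_ptrA_add, nm_ptrA_smul]
      rw [hpB, hiB, h0B, h1B]
    have hz : σB + Complex.I • σB - ((9/25 : ℂ) * (1 + Complex.I)) • σB
        - ((16/25 : ℂ) * (1 + Complex.I)) • σB = 0 := by
      have : σB + Complex.I • σB - ((9/25 : ℂ) * (1 + Complex.I)) • σB
          - ((16/25 : ℂ) * (1 + Complex.I)) • σB
          = ((1 + Complex.I - (9/25 : ℂ) * (1 + Complex.I)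
            - (16/25 : ℂ) * (1 + Complex.I))) • σB := by module
      rw [this, show (1 + Complex.I - (9/25 : ℂ) * (1 + Complex.I)
            - (16/25 : ℂ) * (1 + Complex.I)) = 0 by ring, zero_smul]
    rw [hz] at key
    have h24 : (24/25 : ℂ) ≠ 0 := by norm_num
    exact (smul_eq_zero.mp key).resolve_left h24
  -- the matrices X, Y
  set X : Matrix A B ℂ := Matrix.of (fun a b => U (a, b) i0) with hX
  set Y : Matrix A B ℂ := Matrix.of (fun a b => U (a, b) i1) with hY
  have hw0 : U.mulVec e0 = fun p => U p i0 := by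
    funext p
    simp [Matrix.mulVec, dotProduct, he0, mul_ite, Finset.sum_ite_eq']
  have hw1 : U.mulVec e1 = fun p => U p i1 := by
    funext p
    simp [Matrix.mulVec, dotProduct, he1, mul_ite, Finset.sum_ite_eq']
  rw [nm_conj_outer, hw0, hw1] at hEB hEA
  have hXY : X * Yᴴ = 0 := by
    ext a a'
    have := congrFun (congrFun hEB a) a'
    simpa [ptrB, nmOuter, Matrix.mul_apply, Matrix.conjTranspose_apply, hX, hY] using this
  have hGram : Xᴴ * X = Yᴴ * Y := by
    have heq : ptrA (U * pureState e0 * Uᴴ) = ptrA (U * pureState e1 * Uᴴ) := by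
      rw [h0B, h1B]
    have h0' : (U * pureState e0 * Uᴴ) = nmOuter (fun p => U p i0) (fun p => U p i0) := by
      rw [show pureState e0 = nmOuter e0 e0 from rfl, nm_conj_outer, hw0]
    have h1' : (U * pureState e1 * Uᴴ) = nmOuter (fun p => U p i1) (fun p => U p i1) := by
      rw [show pureState e1 = nmOuter e1 e1 from rfl, nm_conj_outer, hw1]
    rw [h0', h1'] at heq
    ext i j
    have h2 := congrArg star (congrFun (congrFun heq i) j)
    simp only [ptrA, nmOuter, star_sum, star_mul', star_star] at h2
    simp only [Matrix.mul_apply, Matrix.conjTranspose_apply, hX, hY, Matrix.of_apply]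
    exact h2
  have hTr : (Xᴴ * X).trace = 1 := by
    have hUe := congrFun (congrFun hU i0) i0
    simp only [Matrix.mul_apply, Matrix.one_apply_eq, Matrix.conjTranspose_apply] at hUe
    rw [Fintype.sum_prod_type] at hUe
    simp only [Matrix.trace, Matrix.diag, Matrix.mul_apply, Matrix.conjTranspose_apply,
      hX, hY, Matrix.of_apply]
    rw [Finset.sum_comm]
    exact hUe
  -- final algebra
  have hsq : (X * Xᴴ) * (X * Xᴴ) = 0 := by
    calc (X * Xᴴ) * (X * Xᴴ) = X * (Xᴴ * X) * Xᴴ := by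
          rw [Matrix.mul_assoc, Matrix.mul_assoc, Matrix.mul_assoc]
      _ = X * (Yᴴ * Y) * Xᴴ := by rw [hGram]
      _ = (X * Yᴴ) * (Y * Xᴴ) := by rw [Matrix.mul_assoc, Matrix.mul_assoc, Matrix.mul_assoc]
      _ = 0 := by rw [hXY, Matrix.zero_mul]
  have hXXh : X * Xᴴ = 0 := by
    have herm : (X * Xᴴ)ᴴ = X * Xᴴ := by
      rw [Matrix.conjTranspose_mul, Matrix.conjTranspose_conjTranspose]
    have : (X * Xᴴ)ᴴ * (X * Xᴴ) = 0 := by rw [herm]; exact hsq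
    exact Matrix.conjTranspose_mul_self_eq_zero.mp this
  have hX0 : X = 0 := Matrix.self_mul_conjTranspose_eq_zero.mp hXXh
  rw [hX0] at hTr
  simp at hTr
end

section
/- For density matrices ρ_i and a probability distribution {p_i}, the von Neumann entropy satisfies S(Σ_i p_i ρ_i) ≤ H({p_i}) + Σ_i p_i S(ρ_i), where H is the Shannon entropy of {p_i}. -/
open Matrix Complex BigOperators
open scoped Kronecker ComplexOrder

section EntropyMixingAux

variable {n α : Type*} [Fintype n] [DecidableEq n] [Fintype α]

lemma sum_pure_isHermitian (r : α → ℝ) (φ : α → n → ℂ) :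
    (∑ a, (r a : ℂ) • pureState (φ a)).IsHermitian := by
  show _ = _
  ext i j
  simp only [conjTranspose_apply, Matrix.sum_apply, Matrix.smul_apply, pureState,
    smul_eq_mul, star_sum, star_mul', star_star, Complex.star_def, Complex.conj_ofReal,
    Complex.conj_conj]
  refine Finset.sum_congr rfl fun a _ => ?_
  ring

lemma pure_dot (ψ x y : n → ℂ) :
    star x ⬝ᵥ (pureState ψ *ᵥ y) = star (star ψ ⬝ᵥ x) * (star ψ ⬝ᵥ y) := by
  simp only [pureState, mulVec, dotProduct, Pi.star_apply, Finset.sum_mul, Finset.mul_sum,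
    star_sum, star_mul', star_star]
  rw [Finset.sum_comm]
  refine Finset.sum_congr rfl fun i _ => ?_
  refine Finset.sum_congr rfl fun j _ => ?_
  ring

lemma key_dot (r : α → ℝ) (φ : α → n → ℂ) (x y : n → ℂ) :
    star x ⬝ᵥ ((∑ a, (r a : ℂ) • pureState (φ a)) *ᵥ y)
      = ∑ a, (r a : ℂ) * star (star (φ a) ⬝ᵥ x) * (star (φ a) ⬝ᵥ y) := by
  have hsum : (∑ a, (r a : ℂ) • pureState (φ a)) *ᵥ y = ∑ a, ((r a : ℂ) • pureState (φ a)) *ᵥ y := by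
    ext i
    simp only [mulVec, dotProduct, Matrix.sum_apply, Finset.sum_apply, Finset.sum_mul]
    rw [Finset.sum_comm]
  rw [hsum]
  rw [show star x ⬝ᵥ (∑ a, ((r a : ℂ) • pureState (φ a)) *ᵥ y)
      = ∑ a, star x ⬝ᵥ (((r a : ℂ) • pureState (φ a)) *ᵥ y) from by
    simp only [dotProduct, Finset.sum_apply, Finset.mul_sum]
    exact Finset.sum_comm]
  refine Finset.sum_congr rfl fun a _ => ?_
  rw [Matrix.smul_mulVec, dotProduct_smul, pure_dot, smul_eq_mul, mul_assoc]


lemma negMulLog_jensen {ι : Type*} [Fintype ι] (w x : ι → ℝ) (hw : ∀ i, 0 ≤ w i)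
    (hw1 : ∑ i, w i ≤ 1) (hx : ∀ i, 0 ≤ x i) :
    ∑ i, w i * Real.negMulLog (x i) ≤ Real.negMulLog (∑ i, w i * x i) := by
  have hconc := Real.concaveOn_negMulLog
  have h := hconc.le_map_sum (t := (Finset.univ : Finset (Option ι)))
    (w := fun o => o.elim (1 - ∑ i, w i) w) (p := fun o => o.elim 0 x) ?_ ?_ ?_
  · simpa [Fintype.sum_option, Real.negMulLog_zero, smul_eq_mul] using h
  · rintro (_|i) _
    · simpa using hw1
    · exact hw i
  · simp [Fintype.sum_option]
  · rintro (_|i) _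
    · simp
    · exact hx i

lemma vNE_sum_pure_le (r : α → ℝ) (hr : ∀ a, 0 ≤ r a) (φ : α → n → ℂ)
    (hφ : ∀ a, ∑ i, Complex.normSq (φ a i) = 1) :
    vNE (∑ a, (r a : ℂ) • pureState (φ a)) ≤ ∑ a, Real.negMulLog (r a) := by
  classical
  set hσ := sum_pure_isHermitian r φ with hσdef
  set v := hσ.eigenvectorBasis with hv
  set lam := hσ.eigenvalues with hlamdef
  set t : α → n → ℂ := fun a k => (star (φ a)) ⬝ᵥ ⇑(v k) with ht
  -- G : weighted Gram identity
  have G : ∀ j k : n, ∑ a, (r a : ℂ) * star (t a j) * (t a k)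
      = if j = k then (lam k : ℂ) else 0 := by
    intro j k
    have h1 := key_dot r φ (⇑(v j)) (⇑(v k))
    rw [hσ.mulVec_eigenvectorBasis k] at h1
    rw [← h1]
    have h2 : star ⇑(v j) ⬝ᵥ (lam k • ⇑(v k)) = (lam k : ℂ) * (star ⇑(v j) ⬝ᵥ ⇑(v k)) := by
      simp only [dotProduct, Pi.smul_apply, real_smul, Finset.mul_sum]
      exact Finset.sum_congr rfl fun i _ => by ring
    have h3 : (star ⇑(v j) ⬝ᵥ ⇑(v k) : ℂ) = if j = k then 1 else 0 := by
      rw [← orthonormal_iff_ite.mp v.orthonormal j k]; exact dotProduct_comm _ _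
    rw [h2, h3]
    by_cases h : j = k <;> simp [h]
  -- F1 : eigenvalues as weighted sums
  have F1 : ∀ k, lam k = ∑ a, r a * Complex.normSq (t a k) := by
    intro k
    have := G k k
    rw [if_pos rfl] at this
    have h2 : ∑ a, (r a : ℂ) * star (t a k) * (t a k)
        = ((∑ a, r a * Complex.normSq (t a k) : ℝ) : ℂ) := by
      push_cast
      refine Finset.sum_congr rfl fun a _ => ?_
      rw [mul_assoc, Complex.star_def, ← Complex.normSq_eq_conj_mul_self]
    rw [h2] at this
    exact_mod_cast this.symm
  have hlam0 : ∀ k, 0 ≤ lam k := by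
    intro k
    rw [F1 k]
    exact Finset.sum_nonneg fun a _ => mul_nonneg (hr a) (Complex.normSq_nonneg _)
  -- Parseval
  have F2 : ∀ a, ∑ k, Complex.normSq (t a k) = 1 := by
    intro a
    have hx : ∀ y : EuclideanSpace ℂ n, True := fun _ => trivial
    have hp := v.sum_inner_mul_inner ((WithLp.equiv 2 _).symm (φ a)) ((WithLp.equiv 2 _).symm (φ a))
    have h1 : ∀ k, (inner ℂ ((WithLp.equiv 2 (n → ℂ)).symm (φ a)) (v k) : ℂ) = t a k := fun k => dotProduct_comm _ _
    have h2 : ∀ k, (inner ℂ (v k) ((WithLp.equiv 2 (n → ℂ)).symm (φ a)) : ℂ) = star (t a k) := by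
      intro k
      rw [← inner_conj_symm, h1 k]; rfl
    have h3 : (inner ℂ ((WithLp.equiv 2 (n → ℂ)).symm (φ a)) ((WithLp.equiv 2 (n → ℂ)).symm (φ a)) : ℂ)
        = ((∑ i, Complex.normSq (φ a i) : ℝ) : ℂ) := by
      push_cast
      simp only [WithLp.equiv_symm_apply, EuclideanSpace.inner_toLp_toLp, dotProduct, Pi.star_apply]
      refine Finset.sum_congr rfl fun i _ => ?_
      rw [Complex.star_def]; exact Complex.mul_conj _
    simp only [h1, h2, h3] at hp
    have h4 : ∑ k, t a k * star (t a k) = ((∑ k, Complex.normSq (t a k) : ℝ) : ℂ) := by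
      push_cast
      refine Finset.sum_congr rfl fun k _ => ?_
      rw [Complex.star_def, Complex.mul_conj]
    rw [h4, hφ a] at hp
    exact_mod_cast hp
  -- vanishing on zero eigenvalues
  have F0 : ∀ a k, lam k = 0 → r a * Complex.normSq (t a k) = 0 := by
    intro a k hk
    have h := F1 k
    rw [hk] at h
    exact (Finset.sum_eq_zero_iff_of_nonneg
      (fun a _ => mul_nonneg (hr a) (Complex.normSq_nonneg _))).mp h.symm a (Finset.mem_univ a)
  -- the orthonormal family of normalized coefficient columns
  set u : {k : n // lam k ≠ 0} → EuclideanSpace ℂ α := fun k => (WithLp.equiv 2 _).symm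
      (fun a => ((Real.sqrt (r a) / Real.sqrt (lam k.1) : ℝ) : ℂ) * t a k.1) with hu
  have huon : Orthonormal ℂ u := by
    rw [orthonormal_iff_ite]
    intro j k
    have hinner : (inner ℂ (u j) (u k) : ℂ)
        = ((1 / (Real.sqrt (lam j.1) * Real.sqrt (lam k.1)) : ℝ) : ℂ)
          * ∑ a, (r a : ℂ) * star (t a j.1) * t a k.1 := by
      rw [hu]
      simp only [WithLp.equiv_symm_apply, EuclideanSpace.inner_toLp_toLp]
      simp only [dotProduct, Pi.star_apply, star_mul', Complex.star_def, Complex.conj_ofReal,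
        Finset.mul_sum]
      refine Finset.sum_congr rfl fun a _ => ?_
      rw [show (r a : ℂ) = ((Real.sqrt (r a) * Real.sqrt (r a) : ℝ) : ℂ) by
        rw [Real.mul_self_sqrt (hr a)]]
      push_cast
      ring
    rw [hinner, G j.1 k.1]
    by_cases h : j = k
    · subst h
      rw [if_pos rfl, if_pos rfl]
      have hj := j.2
      have hsq : Real.sqrt (lam j.1) * Real.sqrt (lam j.1) = lam j.1 :=
        Real.mul_self_sqrt (hlam0 j.1)
      rw [hsq]
      rw [← Complex.ofReal_mul, one_div, inv_mul_cancel₀ hj, Complex.ofReal_one]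
    · have h1 : j.1 ≠ k.1 := fun hc => h (Subtype.ext hc)
      rw [if_neg h1, if_neg h, mul_zero]
  -- Bessel inequality
  have F4 : ∀ a, ∑ k : {k : n // lam k ≠ 0}, r a * Complex.normSq (t a k.1) / lam k.1 ≤ 1 := by
    intro a
    have hb := huon.sum_inner_products_le (s := Finset.univ) (EuclideanSpace.single a (1 : ℂ))
    have h1 : ∀ k : {k : n // lam k ≠ 0},
        ‖(inner ℂ (u k) (EuclideanSpace.single a (1 : ℂ)) : ℂ)‖ ^ 2
          = r a * Complex.normSq (t a k.1) / lam k.1 := by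
      intro k
      rw [EuclideanSpace.inner_single_right, one_mul]
      rw [Complex.sq_norm, Complex.normSq_conj]
      have : u k a = ((Real.sqrt (r a) / Real.sqrt (lam k.1) : ℝ) : ℂ) * t a k.1 := rfl
      rw [this, Complex.normSq_mul, Complex.normSq_ofReal]
      rw [div_mul_div_comm, Real.mul_self_sqrt (hr a), Real.mul_self_sqrt (hlam0 k.1)]
      rw [div_mul_eq_mul_div]
    have h2 : ‖EuclideanSpace.single a (1 : ℂ)‖ ^ 2 = 1 := by
      rw [EuclideanSpace.norm_single]; norm_num
    rw [h2] at hb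
    calc ∑ k : {k : n // lam k ≠ 0}, r a * Complex.normSq (t a k.1) / lam k.1
        = ∑ k : {k : n // lam k ≠ 0}, ‖(inner ℂ (u k) (EuclideanSpace.single a (1 : ℂ)) : ℂ)‖ ^ 2 :=
          Finset.sum_congr rfl fun k _ => (h1 k).symm
      _ ≤ 1 := hb
  -- weights
  set w : α → n → ℝ := fun a k => if lam k ≠ 0 then r a * Complex.normSq (t a k) / lam k else 0
    with hwdef
  have hw0 : ∀ a k, 0 ≤ w a k := by
    intro a k
    by_cases hk : lam k ≠ 0
    · rw [hwdef]
      simp only [if_pos hk]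
      exact div_nonneg (mul_nonneg (hr a) (Complex.normSq_nonneg _)) (hlam0 k)
    · simp only [hwdef, if_neg hk]; exact le_refl 0
  have hwsum : ∀ a, ∑ k, w a k ≤ 1 := by
    intro a
    have : ∑ k, w a k = ∑ k : {k : n // lam k ≠ 0}, r a * Complex.normSq (t a k.1) / lam k.1 := by
      rw [hwdef]
      rw [← Finset.sum_filter]
      exact Finset.sum_subtype _ (by simp) _
    rw [this]
    exact F4 a
  have hwx : ∀ a, ∑ k, w a k * lam k = r a := by
    intro a
    have h1 : ∀ k, w a k * lam k = r a * Complex.normSq (t a k) := by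
      intro k
      by_cases hk : lam k ≠ 0
      · rw [hwdef]; simp only [if_pos hk]
        exact div_mul_cancel₀ _ hk
      · push_neg at hk
        rw [hwdef]
        simp only [hk, ne_eq, not_true_eq_false, if_false, zero_mul]
        exact (F0 a k hk).symm
    rw [Finset.sum_congr rfl fun k _ => h1 k, ← Finset.mul_sum, F2 a, mul_one]
  have hcol : ∀ k, lam k ≠ 0 → ∑ a, w a k = 1 := by
    intro k hk
    rw [hwdef]
    simp only [if_pos hk]
    rw [← Finset.sum_div, ← F1 k, div_self hk]
  -- unfold vNE and conclude
  have hvNE : vNE (∑ a, (r a : ℂ) • pureState (φ a)) = ∑ k, Real.negMulLog (lam k) := by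
    rw [vNE, dif_pos hσ]
  rw [hvNE]
  calc ∑ k, Real.negMulLog (lam k)
      = ∑ k, (∑ a, w a k) * Real.negMulLog (lam k) := by
        refine Finset.sum_congr rfl fun k _ => ?_
        by_cases hk : lam k = 0
        · rw [hk, Real.negMulLog_zero, mul_zero]
        · rw [hcol k hk, one_mul]
    _ = ∑ a, ∑ k, w a k * Real.negMulLog (lam k) := by
        simp_rw [Finset.sum_mul]
        exact Finset.sum_comm
    _ ≤ ∑ a, Real.negMulLog (∑ k, w a k * lam k) :=
        Finset.sum_le_sum fun a _ => negMulLog_jensen _ _ (hw0 a) (hwsum a) hlam0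
    _ = ∑ a, Real.negMulLog (r a) :=
        Finset.sum_congr rfl fun a _ => by rw [hwx a]

lemma spectral_sum (A : Matrix n n ℂ) (hA : A.IsHermitian) :
    A = ∑ k, (hA.eigenvalues k : ℂ) • pureState (⇑(hA.eigenvectorBasis k)) := by
  conv_lhs => rw [hA.spectral_theorem, Unitary.conjStarAlgAut_apply]
  ext i j
  simp only [Matrix.mul_apply, Matrix.sum_apply, Matrix.smul_apply, pureState, smul_eq_mul,
    Matrix.mul_diagonal, Matrix.diagonal_apply, Matrix.star_apply,
    IsHermitian.eigenvectorUnitary_apply, Function.comp_apply, RCLike.ofReal_alg]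
  refine Finset.sum_congr rfl fun k _ => ?_
  rw [show (∑ x : n, (hA.eigenvectorBasis x).ofLp i
        * if x = k then hA.eigenvalues x • (1:ℂ) else 0)
      = (hA.eigenvectorBasis k).ofLp i * (hA.eigenvalues k • (1:ℂ)) from by
    rw [Finset.sum_eq_single k (fun b _ hb => by rw [if_neg hb, mul_zero])
      (fun hk => absurd (Finset.mem_univ k) hk), if_pos rfl]]
  rw [Complex.real_smul, mul_one]
  push_cast
  ring

-- unit norm of eigenvectors
lemma eigvec_unit (A : Matrix n n ℂ) (hA : A.IsHermitian) (k : n) :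
    ∑ i, Complex.normSq (hA.eigenvectorBasis k i) = 1 := by
  have h := orthonormal_iff_ite.mp hA.eigenvectorBasis.orthonormal k k
  rw [if_pos rfl] at h
  have h2 : (inner ℂ (hA.eigenvectorBasis k) (hA.eigenvectorBasis k) : ℂ)
      = ((∑ i, Complex.normSq (hA.eigenvectorBasis k i) : ℝ) : ℂ) := by
    push_cast
    rw [EuclideanSpace.inner_eq_star_dotProduct]
    simp only [dotProduct, Pi.star_apply]
    refine Finset.sum_congr rfl fun i _ => ?_
    rw [Complex.star_def]
    exact Complex.mul_conj _
  rw [h] at h2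
  exact_mod_cast h2.symm

-- sum of eigenvalues = trace
lemma eig_sum_trace (A : Matrix n n ℂ) (hA : A.IsHermitian) :
    (A.trace : ℂ) = ((∑ k, hA.eigenvalues k : ℝ) : ℂ) := by
  rw [hA.trace_eq_sum_eigenvalues]
  push_cast
  rfl

end EntropyMixingAux

/-- Mixing entropy upper bound: S(Σ pᵢ ρᵢ) ≤ H({pᵢ}) + Σ pᵢ S(ρᵢ). -/
theorem entropy_mixing_upper_bound
    {n m : Type*} [Fintype n] [DecidableEq n] [Fintype m]
    (p : m → ℝ) (hp : ∀ i, 0 ≤ p i) (hp1 : ∑ i, p i = 1)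
    (ρ : m → Matrix n n ℂ) (hρ : ∀ i, IsDensity (ρ i)) :
    vNE (∑ i, (p i : ℂ) • ρ i) ≤
      (∑ i, Real.negMulLog (p i)) + ∑ i, p i * vNE (ρ i) := by
  classical
  have hherm : ∀ i, (ρ i).IsHermitian := fun i => (hρ i).1.1
  set q : m → n → ℝ := fun i k => (hherm i).eigenvalues k with hqdef
  set e : m → n → n → ℂ := fun i k => ⇑((hherm i).eigenvectorBasis k) with hedef
  have hq0 : ∀ i k, 0 ≤ q i k := fun i k => (hρ i).1.eigenvalues_nonneg k
  have hq1 : ∀ i, ∑ k, q i k = 1 := by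
    intro i
    have h := eig_sum_trace (ρ i) (hherm i)
    rw [(hρ i).2] at h
    exact_mod_cast h.symm
  have hvne : ∀ i, vNE (ρ i) = ∑ k, Real.negMulLog (q i k) := by
    intro i; rw [vNE, dif_pos (hherm i)]
  have hrw : (∑ i, (p i : ℂ) • ρ i)
      = ∑ x : m × n, ((p x.1 * q x.1 x.2 : ℝ) : ℂ) • pureState (e x.1 x.2) := by
    rw [Fintype.sum_prod_type]
    refine Finset.sum_congr rfl fun i _ => ?_
    conv_lhs => rw [spectral_sum (ρ i) (hherm i)]
    rw [Finset.smul_sum]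
    refine Finset.sum_congr rfl fun k _ => ?_
    rw [smul_smul, ← Complex.ofReal_mul]
  rw [hrw]
  have key := vNE_sum_pure_le (fun x : m × n => p x.1 * q x.1 x.2)
      (fun x => mul_nonneg (hp x.1) (hq0 x.1 x.2))
      (fun x : m × n => e x.1 x.2)
      (fun x => eigvec_unit (ρ x.1) (hherm x.1) x.2)
  refine key.trans (le_of_eq ?_)
  rw [Fintype.sum_prod_type, ← Finset.sum_add_distrib]
  refine Finset.sum_congr rfl fun i _ => ?_
  calc ∑ k, Real.negMulLog (p i * q i k)
      = ∑ k, (q i k * Real.negMulLog (p i) + p i * Real.negMulLog (q i k)) :=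
        Finset.sum_congr rfl fun k _ => Real.negMulLog_mul _ _
    _ = (∑ k, q i k) * Real.negMulLog (p i) + p i * ∑ k, Real.negMulLog (q i k) := by
        rw [Finset.sum_add_distrib, ← Finset.sum_mul, ← Finset.mul_sum]
    _ = Real.negMulLog (p i) + p i * vNE (ρ i) := by
        rw [hq1 i, one_mul, hvne i]
end

section
/- Let {|a_j⟩}_{j=1..d} and {|b_j⟩}_{j=1..d} be orthonormal bases of d-dimensional spaces H_A, H_B. If |M⟩ ∈ H_A ⊗ H_B is a unit vector such that the value |Σ_j e^{iθ_j} ⟨M|(|a_j⟩ ⊗ |b_j⟩)|² is independent of the phases θ_j ∈ [−π,π] for every choice of local orthonormal bases {|a_j⟩}, {|b_j⟩}, then |M⟩ is a product vector. -/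
open Matrix Complex BigOperators
open scoped Kronecker ComplexOrder

private lemma phase_key (z w : ℂ)
    (h1 : Complex.normSq (Complex.exp ((Real.pi : ℂ) * Complex.I) * z + w)
        = Complex.normSq (z + w))
    (h2 : Complex.normSq (Complex.exp (((Real.pi / 2 : ℝ) : ℂ) * Complex.I) * z + w)
        = Complex.normSq (z + w)) :
    (starRingEnd ℂ) z * w = 0 := by
  rw [Complex.exp_pi_mul_I] at h1
  have hI : Complex.exp (((Real.pi / 2 : ℝ) : ℂ) * Complex.I) = Complex.I := by
    rw [Complex.exp_mul_I, ← Complex.ofReal_cos, ← Complex.ofReal_sin,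
      Real.cos_pi_div_two, Real.sin_pi_div_two]
    simp
  rw [hI] at h2
  simp only [Complex.normSq_apply, Complex.add_re, Complex.add_im, Complex.mul_re,
    Complex.mul_im, Complex.neg_re, Complex.neg_im, Complex.I_re, Complex.I_im,
    Complex.one_re, Complex.one_im, neg_one_mul, one_mul, zero_mul, mul_one, mul_zero,
    zero_sub, sub_zero, zero_add, add_zero] at h1 h2
  apply Complex.ext <;>
    simp only [Complex.mul_re, Complex.mul_im, Complex.conj_re, Complex.conj_im,
      Complex.zero_re, Complex.zero_im] <;> nlinarith [h1, h2]

private lemma sum_single {d : ℕ} (c : Fin d → ℂ) (t : ℝ) (j : Fin d) :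
    ∑ m, Complex.exp (((if m = j then t else 0 : ℝ) : ℂ) * Complex.I) * c m
      = Complex.exp ((t : ℂ) * Complex.I) * c j + ((∑ m, c m) - c j) := by
  have h : ∀ m : Fin d, Complex.exp (((if m = j then t else 0 : ℝ) : ℂ) * Complex.I) * c m
      = c m + (if m = j then (Complex.exp ((t : ℂ) * Complex.I) - 1) * c m else 0) := by
    intro m
    by_cases hm : m = j
    · simp [hm]; ring
    · simp [hm]
  rw [Finset.sum_congr rfl fun m _ => h m, Finset.sum_add_distrib,
    Finset.sum_ite_eq' Finset.univ j]
  simp; ring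

private lemma sum_pair {d : ℕ} (c : Fin d → ℂ) (t : ℝ) (j k : Fin d) (hjk : j ≠ k) :
    ∑ m, Complex.exp (((if m = j ∨ m = k then t else 0 : ℝ) : ℂ) * Complex.I) * c m
      = Complex.exp ((t : ℂ) * Complex.I) * (c j + c k) + ((∑ m, c m) - c j - c k) := by
  have h : ∀ m : Fin d, Complex.exp (((if m = j ∨ m = k then t else 0 : ℝ) : ℂ) * Complex.I) * c m
      = c m + ((if m = j then (Complex.exp ((t : ℂ) * Complex.I) - 1) * c m else 0)
          + (if m = k then (Complex.exp ((t : ℂ) * Complex.I) - 1) * c m else 0)) := by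
    intro m
    by_cases hj : m = j
    · simp [hj, hjk]; ring
    · by_cases hk : m = k
      · simp [hj, hk, Ne.symm hjk]; ring
      · simp [hj, hk]
  rw [Finset.sum_congr rfl fun m _ => h m, Finset.sum_add_distrib, Finset.sum_add_distrib,
    Finset.sum_ite_eq' Finset.univ j, Finset.sum_ite_eq' Finset.univ k]
  simp; ring

private lemma atMostOne {d : ℕ} (c : Fin d → ℂ)
    (hc : ∀ θ : Fin d → ℝ, (∀ m, θ m ∈ Set.Icc (-Real.pi) Real.pi) →
      Complex.normSq (∑ m, Complex.exp ((θ m : ℂ) * Complex.I) * c m)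
        = Complex.normSq (∑ m, c m))
    (j k : Fin d) (hjk : j ≠ k) : c j = 0 ∨ c k = 0 := by
  by_contra hcon
  push_neg at hcon
  obtain ⟨h0, h1⟩ := hcon
  set S := ∑ m, c m with hS
  have hpi : (0:ℝ) ∈ Set.Icc (-Real.pi) Real.pi := by
    constructor <;> [linarith [Real.pi_pos]; linarith [Real.pi_pos]]
  have hmem : ∀ t : ℝ, t ∈ Set.Icc (-Real.pi) Real.pi →
      ∀ P : Fin d → Prop, ∀ inst : DecidablePred P,
      ∀ m, (if P m then t else 0) ∈ Set.Icc (-Real.pi) Real.pi := by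
    intro t ht P inst m
    split_ifs
    · exact ht
    · exact hpi
  have hπ : Real.pi ∈ Set.Icc (-Real.pi) Real.pi := by
    constructor <;> linarith [Real.pi_pos]
  have hπ2 : Real.pi / 2 ∈ Set.Icc (-Real.pi) Real.pi := by
    constructor <;> linarith [Real.pi_pos]
  -- single-index results
  have single : ∀ i : Fin d, (starRingEnd ℂ) (c i) * (S - c i) = 0 := by
    intro i
    have e1 := hc (fun m => if m = i then Real.pi else 0) (hmem _ hπ _ _)
    have e2 := hc (fun m => if m = i then Real.pi / 2 else 0) (hmem _ hπ2 _ _)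
    rw [sum_single c Real.pi i] at e1
    rw [sum_single c (Real.pi / 2) i] at e2
    have hzw : c i + (S - c i) = S := by ring
    refine phase_key (c i) (S - c i) ?_ ?_ <;> rw [hzw]
    · exact e1
    · exact e2
  have pair : (starRingEnd ℂ) (c j + c k) * (S - c j - c k) = 0 := by
    have e1 := hc (fun m => if m = j ∨ m = k then Real.pi else 0) (hmem _ hπ _ _)
    have e2 := hc (fun m => if m = j ∨ m = k then Real.pi / 2 else 0) (hmem _ hπ2 _ _)
    rw [sum_pair c Real.pi j k hjk] at e1
    rw [sum_pair c (Real.pi / 2) j k hjk] at e2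
    have hzw : (c j + c k) + (S - c j - c k) = S := by ring
    refine phase_key (c j + c k) (S - c j - c k) ?_ ?_ <;> rw [hzw]
    · exact e1
    · exact e2
  have hSj : S = c j := by
    rcases mul_eq_zero.mp (single j) with h | h
    · exact absurd (by simpa using h) h0
    · linear_combination h
  have hSk : S = c k := by
    rcases mul_eq_zero.mp (single k) with h | h
    · exact absurd (by simpa using h) h1
    · linear_combination h
  rw [← hSj, ← hSk] at pair
  have : (starRingEnd ℂ) (S + S) * (S - S - S) = 0 := pair
  have hS0 : S = 0 := by
    rcases mul_eq_zero.mp this with h | h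
    · have h2 : S + S = 0 := (map_eq_zero (starRingEnd ℂ)).mp h
      linear_combination h2 / 2
    · linear_combination -h
  exact h0 (by rw [← hSj, hS0])

private lemma exists_perm {d : ℕ} (z0 z1 : Fin d) (hz : z0 ≠ z1) (i k : Fin d) (hik : i ≠ k) :
    ∃ σ : Equiv.Perm (Fin d), σ z0 = i ∧ σ z1 = k := by
  refine ⟨(Equiv.swap z1 ((Equiv.swap z0 i).symm k)).trans (Equiv.swap z0 i), ?_, ?_⟩
  · have hk' : z0 ≠ (Equiv.swap z0 i).symm k := by
      intro h
      apply hik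
      have := congrArg (Equiv.swap z0 i) h
      rwa [Equiv.apply_symm_apply, Equiv.swap_apply_left] at this
    simp only [Equiv.trans_apply]
    rw [Equiv.swap_apply_of_ne_of_ne hz hk', Equiv.swap_apply_left]
  · simp only [Equiv.trans_apply]
    rw [Equiv.swap_apply_left, Equiv.apply_symm_apply]

private lemma delta_on {d : ℕ} (σ : Equiv.Perm (Fin d)) :
    ∀ j k, ∑ x, star ((fun m x => if x = σ m then (1:ℂ) else 0) j x)
      * ((fun m x => if x = σ m then (1:ℂ) else 0) k x) = if j = k then 1 else 0 := by
  intro j k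
  simp only [apply_ite (star : ℂ → ℂ), star_one, star_zero, ite_mul, one_mul, zero_mul]
  rw [Finset.sum_ite_eq' Finset.univ (σ j)]
  simp [Equiv.injective σ |>.eq_iff]

private lemma delta_coeff {d : ℕ} (M : Fin d × Fin d → ℂ) (σ τ : Equiv.Perm (Fin d)) (m : Fin d) :
    (∑ x : Fin d × Fin d, star (M x) *
      ((if x.1 = σ m then (1:ℂ) else 0) * (if x.2 = τ m then (1:ℂ) else 0)))
      = star (M (σ m, τ m)) := by
  rw [Fintype.sum_prod_type]
  simp [mul_ite, ite_mul, Finset.sum_ite_eq', Finset.mul_sum]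


/-- Schmidt-basis phase argument: if |Σⱼ e^{iθⱼ}⟨M|(aⱼ ⊗ bⱼ)|² is independent
of the phases θⱼ for every pair of local orthonormal bases, then M is a
product vector. -/
theorem phase_independent_implies_product
    (d : ℕ) (hd : 2 ≤ d) (M : Fin d × Fin d → ℂ)
    (hM : ∑ x, ‖M x‖ ^ 2 = 1)
    (hconst : ∀ a b : Fin d → Fin d → ℂ,
      (∀ j k, ∑ x, star (a j x) * a k x = if j = k then 1 else 0) →
      (∀ j k, ∑ x, star (b j x) * b k x = if j = k then 1 else 0) →
      ∀ θ θ' : Fin d → ℝ, (∀ j, θ j ∈ Set.Icc (-Real.pi) Real.pi) →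
        (∀ j, θ' j ∈ Set.Icc (-Real.pi) Real.pi) →
        ‖∑ j, Complex.exp ((θ j : ℂ) * Complex.I) *
          (∑ x, star (M x) * (a j x.1 * b j x.2))‖ ^ 2 =
        ‖∑ j, Complex.exp ((θ' j : ℂ) * Complex.I) *
          (∑ x, star (M x) * (a j x.1 * b j x.2))‖ ^ 2) :
    ∃ α β : Fin d → ℂ, ∀ x, M x = α x.1 * β x.2 := by
  have hpi0 : (0:ℝ) ∈ Set.Icc (-Real.pi) Real.pi := by
    constructor <;> linarith [Real.pi_pos]
  set z0 : Fin d := ⟨0, by omega⟩ with hz0def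
  set z1 : Fin d := ⟨1, by omega⟩ with hz1def
  have hz : z0 ≠ z1 := by simp [hz0def, hz1def, Fin.ext_iff]
  -- key vanishing property
  have key : ∀ r s p q : Fin d, r ≠ s → p ≠ q → M (r, p) * M (s, q) = 0 := by
    intro r s p q hrs hpq
    obtain ⟨σ, hσ0, hσ1⟩ := exists_perm z0 z1 hz r s hrs
    obtain ⟨τ, hτ0, hτ1⟩ := exists_perm z0 z1 hz p q hpq
    set a : Fin d → Fin d → ℂ := fun m x => if x = σ m then 1 else 0 with ha
    set b : Fin d → Fin d → ℂ := fun m x => if x = τ m then 1 else 0 with hb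
    set c : Fin d → ℂ := fun m => ∑ x, star (M x) * (a m x.1 * b m x.2) with hcdef
    have hc : ∀ θ : Fin d → ℝ, (∀ m, θ m ∈ Set.Icc (-Real.pi) Real.pi) →
        Complex.normSq (∑ m, Complex.exp ((θ m : ℂ) * Complex.I) * c m)
          = Complex.normSq (∑ m, c m) := by
      intro θ hθ
      have := hconst a b (delta_on σ) (delta_on τ) θ (fun _ => 0) hθ (fun _ => hpi0)
      rw [Complex.sq_norm, Complex.sq_norm] at this
      simpa [hcdef] using this
    have := atMostOne c hc z0 z1 hz
    have hcv : ∀ m, c m = star (M (σ m, τ m)) := fun m => delta_coeff M σ τ m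
    rcases this with h | h
    · rw [hcv z0, hσ0, hτ0, star_eq_zero] at h
      rw [h, zero_mul]
    · rw [hcv z1, hσ1, hτ1, star_eq_zero] at h
      rw [h, mul_zero]
  -- nonzero entry
  have hx0 : ∃ x0 : Fin d × Fin d, M x0 ≠ 0 := by
    by_contra h
    push_neg at h
    rw [Finset.sum_eq_zero (fun x _ => by rw [h x]; simp)] at hM
    norm_num at hM
  obtain ⟨⟨i0, j0⟩, h00⟩ := hx0
  refine ⟨fun i => M (i, j0), fun j => M (i0, j) / M (i0, j0), ?_⟩
  rintro ⟨i, j⟩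
  dsimp only
  rcases eq_or_ne i i0 with hi | hi
  · subst hi
    field_simp
  · rcases eq_or_ne j j0 with hj | hj
    · subst hj
      rw [div_self h00, mul_one]
    · have h1 : M (i0, j0) * M (i, j) = 0 := key i0 i j0 j (Ne.symm hi) (Ne.symm hj)
      have h2 : M (i, j0) * M (i0, j) = 0 := key i i0 j0 j hi (Ne.symm hj)
      have hMij : M (i, j) = 0 := by
        rcases mul_eq_zero.mp h1 with h | h
        · exact absurd h h00
        · exact h
      rw [hMij, ← mul_div_assoc, h2, zero_div]
end

section
/- For d ≥ 2 there is no orthonormal basis {|M_k⟩}_{k=1..d²} of C^d ⊗ C^d such that every maximally entangled state |Ψ⟩ (i.e., every unit vector whose both marginals are maximally mixed) has constant diagonal elements |⟨M_k|Ψ⟩|² = 1/d² for all k. (Counterexample to the disk conjecture of Modi et al.) -/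
open Matrix Complex BigOperators
open scoped Kronecker ComplexOrder

/-- A maximally entangled state of C^d ⊗ C^d. -/
def IsMaxEnt (d : ℕ) (Ψ : Fin d × Fin d → ℂ) : Prop :=
  ∃ a b : Fin d → Fin d → ℂ,
    (∀ j k, ∑ x, star (a j x) * a k x = if j = k then 1 else 0) ∧
    (∀ j k, ∑ x, star (b j x) * b k x = if j = k then 1 else 0) ∧
    ∀ x, Ψ x = ((Real.sqrt d : ℂ))⁻¹ * ∑ j, a j x.1 * b j x.2

section DiskConjectureAux

open Complex BigOperators Finset

/-- If `|∑ c x * φ x|²` is the same for all unimodular phase vectors `φ`,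
then at most one `c x` is nonzero. -/
private lemma phase_lemma {d : ℕ} (c : Fin d → ℂ) (r : ℝ)
    (H : ∀ φ : Fin d → ℂ, (∀ x, ‖φ x‖ = 1) →
      ‖∑ x, c x * φ x‖ ^ 2 = r) :
    ∀ i p : Fin d, c i ≠ 0 → c p ≠ 0 → i = p := by
  classical
  set S : ℝ := ∑ x, ‖c x‖ with hS
  set φ0 : Fin d → ℂ := fun x =>
    if c x = 0 then 1 else (starRingEnd ℂ) (c x) / (‖c x‖ : ℂ) with hφ0
  have hunit0 : ∀ x, ‖φ0 x‖ = 1 := by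
    intro x
    by_cases h : c x = 0
    · simp [hφ0, h]
    · have hne : ‖c x‖ ≠ 0 := norm_ne_zero_iff.mpr h
      simp [hφ0, h, norm_div, Complex.norm_conj, Complex.norm_real, div_self hne]
  have hphase : ∀ x, c x * φ0 x = ((‖c x‖ : ℝ) : ℂ) := by
    intro x
    by_cases h : c x = 0
    · simp [hφ0, h]
    · have hne : (‖c x‖ : ℂ) ≠ 0 := by
        exact_mod_cast Complex.ofReal_ne_zero.mpr (norm_ne_zero_iff.mpr h)
      rw [hφ0]
      simp only [if_neg h]
      rw [mul_div_assoc', Complex.mul_conj, Complex.normSq_eq_norm_sq]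
      push_cast
      rw [pow_two, mul_div_assoc, div_self hne, mul_one]
  have hsum0 : ∑ x, c x * φ0 x = ((S : ℝ) : ℂ) := by
    rw [hS]
    push_cast
    exact Finset.sum_congr rfl fun x _ => hphase x
  have hSnonneg : 0 ≤ S := Finset.sum_nonneg fun x _ => norm_nonneg _
  have hbase : S ^ 2 = r := by
    have := H φ0 hunit0
    rwa [hsum0, Complex.norm_of_nonneg hSnonneg] at this
  have hflip : ∀ j, ‖c j‖ ^ 2 = ‖c j‖ * S := by
    intro j
    set φj : Fin d → ℂ := fun x => if x = j then -φ0 x else φ0 x with hφj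
    have hunitj : ∀ x, ‖φj x‖ = 1 := by
      intro x
      by_cases h : x = j <;> simp [hφj, h, hunit0]
    have hsumj : ∑ x, c x * φj x = (((S - 2 * ‖c j‖) : ℝ) : ℂ) := by
      have step : ∀ x, c x * φj x
          = c x * φ0 x - (if x = j then 2 * (c x * φ0 x) else 0) := by
        intro x
        by_cases h : x = j <;> simp [hφj, h] <;> ring
      rw [Finset.sum_congr rfl fun x _ => step x, Finset.sum_sub_distrib,
        Finset.sum_ite_eq' Finset.univ j (fun x => 2 * (c x * φ0 x))]
      simp only [hsum0, hphase j, Finset.mem_univ, if_true]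
      push_cast
      ring
    have := H φj hunitj
    rw [hsumj, Complex.norm_real, Real.norm_eq_abs, _root_.sq_abs] at this
    nlinarith [hbase]
  intro i p hi hp
  by_contra hne
  have hipos : 0 < ‖c i‖ := norm_pos_iff.mpr hi
  have hppos : 0 < ‖c p‖ := norm_pos_iff.mpr hp
  have hiS : ‖c i‖ = S := by nlinarith [hflip i]
  have hpS : ‖c p‖ = S := by nlinarith [hflip p]
  have hsub : ({i, p} : Finset (Fin d)) ⊆ Finset.univ := Finset.subset_univ _
  have hle : ∑ x ∈ ({i, p} : Finset (Fin d)), ‖c x‖ ≤ S := by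
    rw [hS]
    exact Finset.sum_le_sum_of_subset_of_nonneg hsub
      (fun x _ _ => norm_nonneg _)
  rw [Finset.sum_pair hne, hiS, hpS] at hle
  linarith

private lemma exists_perm_s10 {d : ℕ} {i p j q : Fin d} (hip : i ≠ p) (hjq : j ≠ q) :
    ∃ σ : Equiv.Perm (Fin d), σ i = j ∧ σ p = q := by
  classical
  set s := Equiv.swap i j with hs
  have hsp : s p ≠ j := by
    intro h
    have h2 : s (s p) = s j := congrArg s h
    rw [Equiv.swap_apply_self, Equiv.swap_apply_right] at h2
    exact hip h2.symm
  refine ⟨s.trans (Equiv.swap (s p) q), ?_, ?_⟩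
  · rw [Equiv.trans_apply, hs, Equiv.swap_apply_left,
      Equiv.swap_apply_of_ne_of_ne hsp.symm hjq]
  · rw [Equiv.trans_apply, Equiv.swap_apply_left]

private lemma exists_extension {d : ℕ} (i0 : Fin d) (v : Fin d → ℂ)
    (hv : ∑ x, star (v x) * v x = 1) :
    ∃ u : Fin d → Fin d → ℂ,
      (∀ j k, ∑ x, star (u j x) * u k x = if j = k then 1 else 0) ∧ u i0 = v := by
  classical
  let E := EuclideanSpace ℂ (Fin d)
  let v' : E := WithLp.toLp 2 v
  have hcard : Module.finrank ℂ E = Fintype.card (Fin d) := by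
    simp [E, finrank_euclideanSpace]
  have horth : Orthonormal ℂ (({i0} : Set (Fin d)).restrict (fun _ => v')) := by
    rw [orthonormal_iff_ite]
    intro ⟨a, ha⟩ ⟨b, hb⟩
    have : a = b := by
      simp only [Set.mem_singleton_iff] at ha hb; rw [ha, hb]
    simp only [this, if_pos rfl, Set.restrict_apply]
    rw [PiLp.inner_apply]
    simp only [RCLike.inner_apply, if_true]
    exact (by simpa [mul_comm] using hv : ∑ x, v x * (starRingEnd ℂ) (v x) = 1)
  obtain ⟨b, hb⟩ := horth.exists_orthonormalBasis_extension_of_card_eq hcard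
  refine ⟨fun j => b j, ?_, ?_⟩
  · intro j k
    have := (orthonormal_iff_ite.mp b.orthonormal) j k
    rw [PiLp.inner_apply] at this
    simpa [RCLike.inner_apply, mul_comm] using this
  · exact congrArg WithLp.ofLp (hb i0 rfl)

private lemma orth_scaled_delta {d : ℕ} (c : Fin d → ℂ) (hc : ∀ x, star (c x) * c x = 1)
    (f : Fin d → Fin d) (hf : Function.Injective f) (j k : Fin d) :
    ∑ x, star (c j * if x = f j then (1:ℂ) else 0) * (c k * if x = f k then 1 else 0)
      = if j = k then 1 else 0 := by
  have step : ∀ x, star (c j * if x = f j then (1:ℂ) else 0) * (c k * if x = f k then 1 else 0)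
      = if x = f j then (if x = f k then star (c j) * c k else 0) else 0 := by
    intro x
    by_cases h1 : x = f j
    · by_cases h2 : x = f k
      · rw [if_pos h1, if_pos h2, if_pos h1, if_pos h2, mul_one, mul_one]
      · rw [if_pos h1, if_neg h2, if_pos h1, if_neg h2, mul_zero, mul_zero]
    · rw [if_neg h1, if_neg h1, mul_zero, star_zero, zero_mul]
  rw [Finset.sum_congr rfl fun x _ => step x,
    Finset.sum_ite_eq' Finset.univ (f j) (fun x => if x = f k then star (c j) * c k else 0)]
  simp only [Finset.mem_univ, if_true]
  by_cases h : j = k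
  · subst h
    rw [if_pos rfl, if_pos rfl]
    exact hc j
  · rw [if_neg (fun h2 : f j = f k => h (hf h2)), if_neg h]

private lemma delta_orth {d : ℕ} (f : Fin d → Fin d) (hf : Function.Injective f) (j k : Fin d) :
    ∑ x, star (if x = f j then (1:ℂ) else 0) * (if x = f k then 1 else 0)
      = if j = k then 1 else 0 := by
  have := orth_scaled_delta (fun _ => (1:ℂ)) (by simp) f hf j k
  simpa using this

private lemma abs_sqrt_inv {d : ℕ} : ‖((Real.sqrt d : ℂ))⁻¹‖ ^ 2 = ((d:ℝ))⁻¹ := by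
  rw [norm_inv, Complex.norm_real, Real.norm_eq_abs, _root_.abs_of_nonneg (Real.sqrt_nonneg _), inv_pow,
    Real.sq_sqrt (Nat.cast_nonneg d)]

private lemma final_contra {d : ℕ} (hd : 2 ≤ d) (h : ((d:ℝ))⁻¹ = 1 / (d ^ 2 : ℝ)) : False := by
  have hd2 : (2:ℝ) ≤ d := by exact_mod_cast hd
  have hdpos : (0:ℝ) < d := by linarith
  field_simp at h
  nlinarith [h, hd2]

private lemma unimod_star_mul {z : ℂ} (hz : ‖z‖ = 1) : star z * z = 1 := by
  have h1 : z * star z = ((Complex.normSq z : ℝ) : ℂ) := Complex.mul_conj z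
  rw [mul_comm] at h1
  rw [h1, Complex.normSq_eq_norm_sq, hz]
  norm_num

end DiskConjectureAux

/-- Counterexample to the disk conjecture: for d ≥ 2 there is no orthonormal
basis of C^d ⊗ C^d in which every maximally entangled state has constant
diagonal elements 1/d². -/
theorem no_disk_basis (d : ℕ) (hd : 2 ≤ d) :
    ¬ ∃ M : Fin d × Fin d → (Fin d × Fin d → ℂ),
        (∀ k l, ∑ x, star (M k x) * M l x = if k = l then 1 else 0) ∧
        ∀ Ψ, IsMaxEnt d Ψ → ∀ k,
          ‖∑ x, star (M k x) * Ψ x‖ ^ 2 = 1 / (d ^ 2 : ℝ) := by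
  classical
  rintro ⟨M, horth, hconst⟩
  have hd0 : 0 < d := by omega
  have hdR : (0:ℝ) < d := by exact_mod_cast hd0
  set k0 : Fin d × Fin d := (⟨0, hd0⟩, ⟨0, hd0⟩) with hk0
  set N : Fin d × Fin d → ℂ := M k0 with hN
  -- at most one nonzero entry of N on every permutation graph
  have key : ∀ σ : Equiv.Perm (Fin d), ∀ i p : Fin d,
      N (i, σ i) ≠ 0 → N (p, σ p) ≠ 0 → i = p := by
    intro σ
    have H : ∀ φ : Fin d → ℂ, (∀ x, ‖φ x‖ = 1) →
        ‖∑ x, star (N (x, σ x)) * φ x‖ ^ 2 = 1 / (d : ℝ) := by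
      intro φ hφ
      set Ψ : Fin d × Fin d → ℂ :=
        fun x => ((Real.sqrt d : ℂ))⁻¹ * (φ x.1 * if x.2 = σ x.1 then 1 else 0) with hΨ
      have hME : IsMaxEnt d Ψ := by
        refine ⟨fun j x => φ j * if x = j then 1 else 0,
                fun j x => if x = σ j then 1 else 0, ?_, ?_, ?_⟩
        · exact orth_scaled_delta φ (fun x => unimod_star_mul (hφ x)) id
            Function.injective_id
        · exact delta_orth σ σ.injective
        · intro x
          rw [hΨ]
          congr 1
          rw [Finset.sum_eq_single x.1]
          · simp
          · intro j _ hj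
            have hne : ¬ x.1 = j := fun h => hj h.symm
            simp [hne]
          · simp
      have hinner : (∑ x : Fin d × Fin d, star (M k0 x) * Ψ x)
          = ((Real.sqrt d : ℂ))⁻¹ * ∑ x1, star (N (x1, σ x1)) * φ x1 := by
        rw [Fintype.sum_prod_type, Finset.mul_sum]
        refine Finset.sum_congr rfl fun x1 _ => ?_
        rw [Finset.sum_eq_single (σ x1)]
        · have hv : Ψ (x1, σ x1) = ((Real.sqrt d : ℂ))⁻¹ * φ x1 := by simp [hΨ]
          rw [hv, ← hN]; ring
        · intro x2 _ hx2
          have hv : Ψ (x1, x2) = 0 := by simp [hΨ, hx2]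
          rw [hv, mul_zero]
        · simp
      have h2 := hconst Ψ hME k0
      rw [hinner, norm_mul, mul_pow, abs_sqrt_inv] at h2
      have hne : (d:ℝ) ≠ 0 := ne_of_gt hdR
      field_simp at h2 ⊢
      nlinarith [h2]
    have key' := phase_lemma (fun x => star (N (x, σ x))) (1 / (d:ℝ)) H
    intro i p hi hp
    exact key' i p (star_ne_zero.mpr hi) (star_ne_zero.mpr hp)
  -- any two nonzero entries share a row or a column
  have pairs : ∀ x y : Fin d × Fin d, N x ≠ 0 → N y ≠ 0 → x.1 = y.1 ∨ x.2 = y.2 := by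
    rintro ⟨i, j⟩ ⟨p, q⟩ hx hy
    by_cases h1 : i = p
    · exact Or.inl h1
    by_cases h2 : j = q
    · exact Or.inr h2
    obtain ⟨σ, hσi, hσp⟩ := exists_perm_s10 h1 h2
    exact absurd (key σ i p (by rwa [hσi]) (by rwa [hσp])) h1
  have hMnorm : ∑ x : Fin d × Fin d, star (N x) * N x = 1 := by
    have := horth k0 k0
    simpa [← hN] using this
  have hex : ∃ x, N x ≠ 0 := by
    by_contra h
    push_neg at h
    rw [Finset.sum_eq_zero (fun x _ => by rw [h x, mul_zero])] at hMnorm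
    exact zero_ne_one hMnorm
  obtain ⟨x0, hx0⟩ := hex
  have hsupp : (∀ x, N x ≠ 0 → x.1 = x0.1) ∨ (∀ x, N x ≠ 0 → x.2 = x0.2) := by
    by_cases hrow : ∀ x, N x ≠ 0 → x.1 = x0.1
    · exact Or.inl hrow
    · push_neg at hrow
      obtain ⟨x1, hx1, hx1ne⟩ := hrow
      have hx12 : x1.2 = x0.2 := (pairs x1 x0 hx1 hx0).resolve_left hx1ne
      refine Or.inr fun x hx => ?_
      rcases pairs x x0 hx hx0 with h | h
      · rcases pairs x x1 hx hx1 with h' | h'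
        · exact absurd (h'.symm.trans h) hx1ne
        · exact h'.trans hx12
      · exact h
  rcases hsupp with hrow | hcol
  · -- all nonzero entries in row i0
    set i0 := x0.1 with hi0
    have hzero : ∀ x1 x2, x1 ≠ i0 → N (x1, x2) = 0 := by
      intro x1 x2 hne
      by_contra hc
      exact hne (hrow (x1, x2) hc)
    have hv : ∑ x2, star (N (i0, x2)) * N (i0, x2) = 1 := by
      rw [Fintype.sum_prod_type] at hMnorm
      rwa [Finset.sum_eq_single i0
        (fun x1 _ hx1 => Finset.sum_eq_zero fun x2 _ => by rw [hzero x1 x2 hx1, mul_zero])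
        (by simp)] at hMnorm
    obtain ⟨u, hu, hui0⟩ := exists_extension i0 (fun x2 => N (i0, x2)) hv
    set Ψ : Fin d × Fin d → ℂ := fun x => ((Real.sqrt d : ℂ))⁻¹ * u x.1 x.2 with hΨ
    have hME : IsMaxEnt d Ψ := by
      refine ⟨fun j x => if x = j then 1 else 0, u, ?_, hu, ?_⟩
      · exact delta_orth id Function.injective_id
      · intro x
        rw [hΨ]
        congr 1
        rw [Finset.sum_eq_single x.1]
        · simp
        · intro j _ hj
          have hne : ¬ x.1 = j := fun h => hj h.symm
          simp [hne]
        · simp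
    have hinner : ∑ x : Fin d × Fin d, star (M k0 x) * Ψ x = ((Real.sqrt d : ℂ))⁻¹ := by
      rw [Fintype.sum_prod_type]
      rw [Finset.sum_eq_single i0
        (fun x1 _ hx1 => Finset.sum_eq_zero fun x2 _ => by
          rw [hΨ, ← hN, hzero x1 x2 hx1]; simp)
        (by simp)]
      have step : ∀ x2, star (M k0 (i0, x2)) * Ψ (i0, x2)
          = ((Real.sqrt d : ℂ))⁻¹ * (star (N (i0, x2)) * N (i0, x2)) := by
        intro x2
        have hΨv : Ψ (i0, x2) = ((Real.sqrt d : ℂ))⁻¹ * N (i0, x2) := by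
          rw [hΨ]
          show ((Real.sqrt d : ℂ))⁻¹ * u i0 x2 = _
          rw [congrFun hui0 x2]
        rw [hΨv, ← hN]
        ring
      rw [Finset.sum_congr rfl fun x2 _ => step x2, ← Finset.mul_sum, hv, mul_one]
    have h2 := hconst Ψ hME k0
    rw [hinner, abs_sqrt_inv] at h2
    exact final_contra hd h2
  · -- all nonzero entries in column j0
    set j0 := x0.2 with hj0
    have hzero : ∀ x1 x2, x2 ≠ j0 → N (x1, x2) = 0 := by
      intro x1 x2 hne
      by_contra hc
      exact hne (hcol (x1, x2) hc)
    have hv : ∑ x1, star (N (x1, j0)) * N (x1, j0) = 1 := by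
      rw [Fintype.sum_prod_type] at hMnorm
      rwa [Finset.sum_congr rfl (fun x1 _ => Finset.sum_eq_single j0
        (fun x2 _ hx2 => by rw [hzero x1 x2 hx2, mul_zero]) (by simp))] at hMnorm
    obtain ⟨u, hu, huj0⟩ := exists_extension j0 (fun x1 => N (x1, j0)) hv
    set Ψ : Fin d × Fin d → ℂ := fun x => ((Real.sqrt d : ℂ))⁻¹ * u x.2 x.1 with hΨ
    have hME : IsMaxEnt d Ψ := by
      refine ⟨u, fun j x => if x = j then 1 else 0, hu, ?_, ?_⟩
      · exact delta_orth id Function.injective_id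
      · intro x
        rw [hΨ]
        congr 1
        rw [Finset.sum_eq_single x.2]
        · simp
        · intro j _ hj
          have hne : ¬ x.2 = j := fun h => hj h.symm
          simp [hne]
        · simp
    have hinner : ∑ x : Fin d × Fin d, star (M k0 x) * Ψ x = ((Real.sqrt d : ℂ))⁻¹ := by
      rw [Fintype.sum_prod_type]
      rw [Finset.sum_congr rfl (fun x1 _ => Finset.sum_eq_single j0
        (fun x2 _ hx2 => by rw [hΨ, ← hN, hzero x1 x2 hx2]; simp) (by simp))]
      have step : ∀ x1, star (M k0 (x1, j0)) * Ψ (x1, j0)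
          = ((Real.sqrt d : ℂ))⁻¹ * (star (N (x1, j0)) * N (x1, j0)) := by
        intro x1
        have hΨv : Ψ (x1, j0) = ((Real.sqrt d : ℂ))⁻¹ * N (x1, j0) := by
          rw [hΨ]
          show ((Real.sqrt d : ℂ))⁻¹ * u j0 x1 = _
          rw [congrFun huj0 x1]
        rw [hΨv, ← hN]
        ring
      rw [Finset.sum_congr rfl fun x1 _ => step x1, ← Finset.mul_sum, hv, mul_one]
    have h2 := hconst Ψ hME k0
    rw [hinner, abs_sqrt_inv] at h2
    exact final_contra hd h2
end

section
/- Explicit qudit masker verification: for odd d, define isometries from C^d to C^{2d} ⊗ C^{2d} by M_{A,i}|ψ⟩ = (Z^i|ψ⟩) ⊗ |i+d⟩, M_{B,i}|ψ⟩ = |i+d⟩ ⊗ (Z^i|ψ⟩) for 1 ≤ i ≤ d, and M_j|ψ⟩ = Σ_k α_k |k ⊕ j⟩ ⊗ |k ⊕ 2j⟩ for 1 ≤ j ≤ d−1 (⊕ mod d), where |ψ⟩ = Σ_k α_k|k⟩ and Z|k⟩ = e^{2πik/d}|k⟩. Then the channel Φ(ρ) = Σ_i (1/(d(d+1)))(M_{A,i}ρM_{A,i}†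 + M_{B,i}ρM_{B,i}†) + Σ_j (1/(d+1)) M_j ρ M_j† has both partial traces constant (independent of ρ). -/
open Matrix Complex BigOperators
open scoped Kronecker ComplexOrder

/-- embedding of the d-dimensional space into the first half of C^{2d} -/
def lowE {d : ℕ} (k : Fin d) : Fin (2 * d) := ⟨k.val, by have := k.isLt; omega⟩

/-- embedding onto the second half of C^{2d}: |k+d⟩ -/
def highE {d : ℕ} (k : Fin d) : Fin (2 * d) := ⟨k.val + d, by have := k.isLt; omega⟩

/-- M_{A,i}|ψ⟩ = (Z^i|ψ⟩) ⊗ |i+d⟩ -/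
noncomputable def MAmat (d : ℕ) (i : Fin d) :
    Matrix (Fin (2 * d) × Fin (2 * d)) (Fin d) ℂ :=
  fun ab k => if ab.1 = lowE k ∧ ab.2 = highE i then
    Complex.exp (2 * Real.pi * Complex.I * (i : ℕ) * (k : ℕ) / d) else 0

/-- M_{B,i}|ψ⟩ = |i+d⟩ ⊗ (Z^i|ψ⟩) -/
noncomputable def MBmat (d : ℕ) (i : Fin d) :
    Matrix (Fin (2 * d) × Fin (2 * d)) (Fin d) ℂ :=
  fun ab k => if ab.2 = lowE k ∧ ab.1 = highE i then
    Complex.exp (2 * Real.pi * Complex.I * (i : ℕ) * (k : ℕ) / d) else 0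

/-- M_j|ψ⟩ = Σ_k α_k |k ⊕ j⟩ ⊗ |k ⊕ 2j⟩ (⊕ = mod-d sum) -/
def Mjmat (d : ℕ) (j : Fin d) :
    Matrix (Fin (2 * d) × Fin (2 * d)) (Fin d) ℂ :=
  fun ab k => if ab.1 = lowE (k + j) ∧ ab.2 = lowE (k + j + j) then 1 else 0


set_option linter.unusedSectionVars false
set_option maxHeartbeats 1000000

section Helpers
variable {d : ℕ} [NeZero d]

def res (a : Fin (2*d)) : Fin d := ⟨a.val % d, Nat.mod_lt _ (Nat.pos_of_ne_zero (NeZero.ne d))⟩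

noncomputable def eps (d : ℕ) (i k : ℕ) : ℂ := Complex.exp (2 * Real.pi * Complex.I * i * k / d)

lemma lowE_eq_iff (a : Fin (2*d)) (k : Fin d) : a = lowE k ↔ (a:ℕ) < d ∧ k = res a := by
  constructor
  · rintro rfl
    exact ⟨k.isLt, by simp [lowE, res, Fin.ext_iff, Nat.mod_eq_of_lt k.isLt]⟩
  · rintro ⟨h, rfl⟩
    simp [lowE, res, Fin.ext_iff, Nat.mod_eq_of_lt h]

lemma highE_eq_iff (a : Fin (2*d)) (i : Fin d) : a = highE i ↔ d ≤ (a:ℕ) ∧ i = res a := by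
  constructor
  · rintro rfl
    refine ⟨Nat.le_add_left d i, ?_⟩
    simp [highE, res, Fin.ext_iff, Nat.add_mod_right, Nat.mod_eq_of_lt i.isLt]
  · rintro ⟨h, rfl⟩
    have h2 := a.isLt
    have h3 : (a:ℕ) % d = a - d := by
      rw [Nat.mod_eq_sub_mod h]; exact Nat.mod_eq_of_lt (by omega)
    simp only [highE, res, Fin.ext_iff]
    omega

lemma eps_eq_pow (i k : ℕ) : eps d i k = Complex.exp (2 * Real.pi * Complex.I / d) ^ (i * k) := by
  rw [eps, ← Complex.exp_nat_mul]
  congr 1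
  push_cast
  ring

lemma star_eps (i k : ℕ) : star (eps d i k) = (Complex.exp (2 * Real.pi * Complex.I / d))⁻¹ ^ (i * k) := by
  rw [eps_eq_pow, star_pow]
  congr 1
  rw [Complex.star_def, ← Complex.exp_conj, ← Complex.exp_neg]
  congr 1
  simp only [map_div₀, _root_.map_mul, Complex.conj_I, Complex.conj_ofReal, map_ofNat, map_natCast]
  ring

lemma eps_mul_star_self (i k : ℕ) : eps d i k * star (eps d i k) = 1 := by
  rw [star_eps, eps_eq_pow, inv_pow, mul_inv_cancel₀ (pow_ne_zero _ (Complex.exp_ne_zero _))]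

lemma sum_eps_mul_star (k k' : Fin d) :
    ∑ i : Fin d, eps d i k * star (eps d i k') = if k = k' then (d:ℂ) else 0 := by
  set ζ := Complex.exp (2 * Real.pi * Complex.I / d) with hζ
  have hprim : IsPrimitiveRoot ζ d := Complex.isPrimitiveRoot_exp d (NeZero.ne d)
  have hz : ζ ≠ 0 := Complex.exp_ne_zero _
  have hterm : ∀ i : Fin d, eps d i k * star (eps d i k') = (ζ ^ (k:ℕ) * (ζ ^ (k':ℕ))⁻¹) ^ (i:ℕ) := by
    intro i
    rw [eps_eq_pow, star_eps, ← hζ]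
    rw [show (i:ℕ) * (k:ℕ) = (k:ℕ) * (i:ℕ) from Nat.mul_comm _ _,
        show (i:ℕ) * (k':ℕ) = (k':ℕ) * (i:ℕ) from Nat.mul_comm _ _,
        pow_mul, pow_mul, mul_pow, inv_pow]
  simp only [hterm]
  rw [Fin.sum_univ_eq_sum_range (fun i => (ζ ^ (k:ℕ) * (ζ ^ (k':ℕ))⁻¹) ^ i)]
  by_cases h : k = k'
  · subst h
    simp [mul_inv_cancel₀ (pow_ne_zero _ hz)]
  · rw [if_neg h]
    set w := ζ ^ (k:ℕ) * (ζ ^ (k':ℕ))⁻¹ with hw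
    have hwz : w = ζ ^ ((k:ℕ) - (k':ℕ) : ℤ) := by
      rw [hw, zpow_sub₀ hz, zpow_natCast, zpow_natCast, div_eq_mul_inv]
    have hw1 : w ≠ 1 := by
      rw [hwz]
      intro hcon
      rw [hprim.zpow_eq_one_iff_dvd] at hcon
      have h1 := k.isLt
      have h2 := k'.isLt
      have hne : ((k:ℕ):ℤ) - ((k':ℕ):ℤ) ≠ 0 := by
        intro h0
        exact h (Fin.ext (by omega))
      have hle := Int.le_of_dvd (abs_pos.mpr hne) ((dvd_abs _ _).mpr hcon)
      have hlt : |((k:ℕ):ℤ) - ((k':ℕ):ℤ)| < d := by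
        rw [abs_lt]; constructor <;> [omega; omega]
      omega
    have hwd : w ^ d = 1 := by
      rw [hwz, ← zpow_natCast (ζ ^ (((k:ℕ):ℤ) - ((k':ℕ):ℤ))), ← _root_.zpow_mul, mul_comm, _root_.zpow_mul, zpow_natCast, hprim.pow_eq_one, _root_.one_zpow]
    rw [geom_sum_eq hw1, hwd, sub_self, zero_div]

lemma conj_apply {K P : Type*} [Fintype K] (M : Matrix P K ℂ) (ρ : Matrix K K ℂ) (p q : P) :
    (M * ρ * Mᴴ) p q = ∑ k, ∑ k', M p k * ρ k k' * star (M q k') := by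
  simp only [Matrix.mul_apply, Matrix.conjTranspose_apply, Finset.sum_mul]
  rw [Finset.sum_comm]

lemma ptrB_MA (i : Fin d) (ρ : Matrix (Fin d) (Fin d) ℂ) (a a' : Fin (2*d)) :
    (∑ b, (MAmat d i * ρ * (MAmat d i)ᴴ) (a, b) (a', b)) =
    if (a:ℕ) < d ∧ (a':ℕ) < d then
      eps d i (res a) * ρ (res a) (res a') * star (eps d i (res a')) else 0 := by
  simp only [conj_apply, MAmat, eps]
  rw [Finset.sum_eq_single (highE i)]
  · by_cases ha : (a:ℕ) < d <;> by_cases ha' : (a':ℕ) < d <;>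
      simp [lowE_eq_iff, ha, ha', Finset.sum_ite_eq', ite_and, apply_ite (starRingEnd ℂ), mul_ite, mul_zero]
  · intro b _ hb
    simp [hb]
  · simp

lemma lowE_inj (k k' : Fin d) : lowE k = lowE k' ↔ k = k' := by
  simp [lowE, Fin.ext_iff]

lemma sum_ite_lowE (a : Fin (2*d)) (f : Fin d → ℂ) :
    (∑ k, if a = lowE k then f k else 0) = if (a:ℕ) < d then f (res a) else 0 := by
  by_cases h : (a:ℕ) < d <;> simp [lowE_eq_iff, h, Finset.sum_ite_eq']

lemma sum_low (f : Fin d → ℂ) :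
    ∑ b : Fin (2*d), (if (b:ℕ) < d then f (res b) else 0) = ∑ k, f k := by
  have h : ∀ b : Fin (2*d), (if (b:ℕ) < d then f (res b) else 0)
      = ∑ k, if b = lowE k then f k else 0 := fun b => (sum_ite_lowE b f).symm
  simp only [h]
  rw [Finset.sum_comm]
  simp [Finset.sum_ite_eq]

lemma eps_mul_star_self' (i k : ℕ) :
    Complex.exp (2 * Real.pi * Complex.I * i * k / d) *
      star (Complex.exp (2 * Real.pi * Complex.I * i * k / d)) = 1 :=
  eps_mul_star_self i k

lemma ptrB_MB (i : Fin d) (ρ : Matrix (Fin d) (Fin d) ℂ) (a a' : Fin (2*d)) :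
    (∑ b, (MBmat d i * ρ * (MBmat d i)ᴴ) (a, b) (a', b)) =
    if a = highE i ∧ a' = highE i then ρ.trace else 0 := by
  simp only [conj_apply, MBmat]
  by_cases h : a = highE i ∧ a' = highE i
  · rw [if_pos h]
    simp only [h.1, h.2, and_true, if_true]
    have hcollapse : ∀ b : Fin (2*d),
        (∑ k, ∑ k', (if b = lowE k then Complex.exp (2 * Real.pi * Complex.I * i * k / d) else 0)
          * ρ k k' * star (if b = lowE k' then Complex.exp (2 * Real.pi * Complex.I * i * k' / d) else 0))
        = if (b:ℕ) < d then ρ (res b) (res b) else 0 := by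
      intro b
      have h1 : ∀ k : Fin d,
          (∑ k', (if b = lowE k then Complex.exp (2 * Real.pi * Complex.I * i * k / d) else 0)
            * ρ k k' * star (if b = lowE k' then Complex.exp (2 * Real.pi * Complex.I * i * k' / d) else 0))
          = if b = lowE k then (if (b:ℕ) < d then
              Complex.exp (2 * Real.pi * Complex.I * i * k / d) * ρ k (res b)
                * star (Complex.exp (2 * Real.pi * Complex.I * i * (res b) / d)) else 0) else 0 := by
        intro k
        by_cases hb : b = lowE k
        · rw [if_pos hb]
          have hbd : (b:ℕ) < d := by rw [hb]; exact k.isLt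
          simp only [apply_ite (star : ℂ → ℂ), star_zero, mul_ite, mul_zero]
          rw [sum_ite_lowE b (fun k' => Complex.exp (2 * Real.pi * Complex.I * i * k / d)
            * ρ k k' * star (Complex.exp (2 * Real.pi * Complex.I * i * (k':ℕ) / d)))]
          simp only [hbd, if_true, if_pos hb]
        · simp only [if_neg hb, zero_mul, Finset.sum_const_zero]
      simp only [h1]
      rw [sum_ite_lowE]
      by_cases hd' : (b:ℕ) < d
      · simp only [hd', if_true]
        rw [show Complex.exp (2 * Real.pi * Complex.I * i * (res b) / d) * ρ (res b) (res b)
            * star (Complex.exp (2 * Real.pi * Complex.I * i * (res b) / d))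
          = ρ (res b) (res b) * (Complex.exp (2 * Real.pi * Complex.I * i * (res b) / d)
            * star (Complex.exp (2 * Real.pi * Complex.I * i * (res b) / d))) from by ring]
        rw [eps_mul_star_self', mul_one]
      · simp [hd']
    simp only [hcollapse]
    rw [sum_low (fun k => ρ k k)]
    rfl
  · rw [if_neg h]
    rw [not_and_or] at h
    rcases h with h | h
    · refine Finset.sum_eq_zero fun b _ => ?_
      refine Finset.sum_eq_zero fun k _ => Finset.sum_eq_zero fun k' _ => ?_
      simp [h]
    · refine Finset.sum_eq_zero fun b _ => ?_
      refine Finset.sum_eq_zero fun k _ => Finset.sum_eq_zero fun k' _ => ?_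
      simp [h]

lemma sum_ite_lowE_shift (a : Fin (2*d)) (j : Fin d) (f : Fin d → ℂ) :
    (∑ k, if a = lowE (k+j) then f k else 0) = if (a:ℕ) < d then f (res a - j) else 0 := by
  have h : ∀ k : Fin d, (a = lowE (k+j)) ↔ ((a:ℕ) < d ∧ k = res a - j) := by
    intro k
    rw [lowE_eq_iff]
    constructor
    · rintro ⟨h1, h2⟩; exact ⟨h1, by rw [← h2]; abel⟩
    · rintro ⟨h1, h2⟩; exact ⟨h1, by rw [h2]; abel⟩
  simp only [h]
  by_cases hd' : (a:ℕ) < d <;> simp [hd', Finset.sum_ite_eq']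

lemma ptrB_Mj (j : Fin d) (ρ : Matrix (Fin d) (Fin d) ℂ) (a a' : Fin (2*d)) :
    (∑ b, (Mjmat d j * ρ * (Mjmat d j)ᴴ) (a, b) (a', b)) =
    if a = a' ∧ (a:ℕ) < d then ρ (res a - j) (res a - j) else 0 := by
  simp only [conj_apply, Mjmat]
  rw [Finset.sum_comm]
  have h1 : ∀ k : Fin d,
      (∑ b : Fin (2*d), ∑ k' : Fin d,
        (if a = lowE (k + j) ∧ b = lowE (k + j + j) then (1:ℂ) else 0) * ρ k k' *
          star (if a' = lowE (k' + j) ∧ b = lowE (k' + j + j) then (1:ℂ) else 0))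
      = if a = lowE (k + j) ∧ a' = lowE (k + j) then ρ k k else 0 := by
    intro k
    rw [Finset.sum_comm]
    have h2 : ∀ k' : Fin d,
        (∑ b : Fin (2*d),
          (if a = lowE (k + j) ∧ b = lowE (k + j + j) then (1:ℂ) else 0) * ρ k k' *
            star (if a' = lowE (k' + j) ∧ b = lowE (k' + j + j) then (1:ℂ) else 0))
        = if k' = k then (if a = lowE (k + j) ∧ a' = lowE (k + j) then ρ k k else 0) else 0 := by
      intro k'
      by_cases hk : k' = k
      · subst hk
        rw [if_pos rfl]
        by_cases ha : a = lowE (k' + j) <;> by_cases ha' : a' = lowE (k' + j)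
        · rw [if_pos ⟨ha, ha'⟩]
          rw [Finset.sum_eq_single (lowE (k' + j + j))] <;>
            simp +contextual [ha, ha']
        · simp [ha, ha']
        · simp [ha]
        · simp [ha]
      · rw [if_neg hk]
        refine Finset.sum_eq_zero fun b _ => ?_
        by_cases hb : b = lowE (k + j + j)
        · have : ¬ (a' = lowE (k' + j) ∧ b = lowE (k' + j + j)) := by
            rintro ⟨-, hb'⟩
            rw [hb, lowE_inj] at hb'
            exact hk (add_right_cancel (add_right_cancel hb')).symm
          simp [this]
        · simp [hb]
    simp only [h2]
    simp [Finset.sum_ite_eq']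
  simp only [h1]
  have h4 : ∀ k : Fin d, (a = lowE (k + j) ∧ a' = lowE (k + j)) ↔ (a = a' ∧ a = lowE (k + j)) := by
    intro k
    constructor
    · rintro ⟨u, v⟩; exact ⟨u.trans v.symm, u⟩
    · rintro ⟨u, v⟩; exact ⟨v, u ▸ v⟩
  simp only [h4]
  by_cases haa : a = a'
  · subst haa
    simp only [true_and]
    rw [sum_ite_lowE_shift a j (fun k => ρ k k)]
  · simp [haa]

lemma ptrA_MB (i : Fin d) (ρ : Matrix (Fin d) (Fin d) ℂ) (b b' : Fin (2*d)) :
    (∑ a, (MBmat d i * ρ * (MBmat d i)ᴴ) (a, b) (a, b')) =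
    if (b:ℕ) < d ∧ (b':ℕ) < d then
      eps d i (res b) * ρ (res b) (res b') * star (eps d i (res b')) else 0 := by
  simp only [conj_apply, MBmat, eps]
  rw [Finset.sum_eq_single (highE i)]
  · by_cases hb : (b:ℕ) < d <;> by_cases hb' : (b':ℕ) < d <;>
      simp [lowE_eq_iff, hb, hb', Finset.sum_ite_eq', ite_and,
        apply_ite (starRingEnd ℂ), mul_ite, mul_zero]
  · intro a _ ha
    simp [ha]
  · simp

lemma ptrA_MA (i : Fin d) (ρ : Matrix (Fin d) (Fin d) ℂ) (b b' : Fin (2*d)) :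
    (∑ a, (MAmat d i * ρ * (MAmat d i)ᴴ) (a, b) (a, b')) =
    if b = highE i ∧ b' = highE i then ρ.trace else 0 := by
  simp only [conj_apply, MAmat]
  by_cases h : b = highE i ∧ b' = highE i
  · rw [if_pos h]
    simp only [h.1, h.2, and_true, if_true]
    have hcollapse : ∀ a : Fin (2*d),
        (∑ k, ∑ k', (if a = lowE k then Complex.exp (2 * Real.pi * Complex.I * i * k / d) else 0)
          * ρ k k' * star (if a = lowE k' then Complex.exp (2 * Real.pi * Complex.I * i * k' / d) else 0))
        = if (a:ℕ) < d then ρ (res a) (res a) else 0 := by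
      intro a
      have h1 : ∀ k : Fin d,
          (∑ k', (if a = lowE k then Complex.exp (2 * Real.pi * Complex.I * i * k / d) else 0)
            * ρ k k' * star (if a = lowE k' then Complex.exp (2 * Real.pi * Complex.I * i * k' / d) else 0))
          = if a = lowE k then (if (a:ℕ) < d then
              Complex.exp (2 * Real.pi * Complex.I * i * k / d) * ρ k (res a)
                * star (Complex.exp (2 * Real.pi * Complex.I * i * (res a) / d)) else 0) else 0 := by
        intro k
        by_cases hb : a = lowE k
        · rw [if_pos hb]
          have hbd : (a:ℕ) < d := by rw [hb]; exact k.isLt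
          simp only [apply_ite (star : ℂ → ℂ), star_zero, mul_ite, mul_zero]
          rw [sum_ite_lowE a (fun k' => Complex.exp (2 * Real.pi * Complex.I * i * k / d)
            * ρ k k' * star (Complex.exp (2 * Real.pi * Complex.I * i * (k':ℕ) / d)))]
          simp only [hbd, if_true, if_pos hb]
        · simp only [if_neg hb, zero_mul, Finset.sum_const_zero]
      simp only [h1]
      rw [sum_ite_lowE]
      by_cases hd' : (a:ℕ) < d
      · simp only [hd', if_true]
        rw [show Complex.exp (2 * Real.pi * Complex.I * i * (res a) / d) * ρ (res a) (res a)
            * star (Complex.exp (2 * Real.pi * Complex.I * i * (res a) / d))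
          = ρ (res a) (res a) * (Complex.exp (2 * Real.pi * Complex.I * i * (res a) / d)
            * star (Complex.exp (2 * Real.pi * Complex.I * i * (res a) / d))) from by ring]
        rw [eps_mul_star_self', mul_one]
      · simp [hd']
    simp only [hcollapse]
    rw [sum_low (fun k => ρ k k)]
    rfl
  · rw [if_neg h]
    rw [not_and_or] at h
    rcases h with h | h <;>
    · refine Finset.sum_eq_zero fun a _ => ?_
      refine Finset.sum_eq_zero fun k _ => Finset.sum_eq_zero fun k' _ => ?_
      simp [h]

lemma ptrA_Mj (j : Fin d) (ρ : Matrix (Fin d) (Fin d) ℂ) (b b' : Fin (2*d)) :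
    (∑ a, (Mjmat d j * ρ * (Mjmat d j)ᴴ) (a, b) (a, b')) =
    if b = b' ∧ (b:ℕ) < d then ρ (res b - (j + j)) (res b - (j + j)) else 0 := by
  simp only [conj_apply, Mjmat]
  rw [Finset.sum_comm]
  have h1 : ∀ k : Fin d,
      (∑ a : Fin (2*d), ∑ k' : Fin d,
        (if a = lowE (k + j) ∧ b = lowE (k + j + j) then (1:ℂ) else 0) * ρ k k' *
          star (if a = lowE (k' + j) ∧ b' = lowE (k' + j + j) then (1:ℂ) else 0))
      = if b = lowE (k + j + j) ∧ b' = lowE (k + j + j) then ρ k k else 0 := by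
    intro k
    rw [Finset.sum_comm]
    have h2 : ∀ k' : Fin d,
        (∑ a : Fin (2*d),
          (if a = lowE (k + j) ∧ b = lowE (k + j + j) then (1:ℂ) else 0) * ρ k k' *
            star (if a = lowE (k' + j) ∧ b' = lowE (k' + j + j) then (1:ℂ) else 0))
        = if k' = k then (if b = lowE (k + j + j) ∧ b' = lowE (k + j + j) then ρ k k else 0) else 0 := by
      intro k'
      by_cases hk : k' = k
      · subst hk
        rw [if_pos rfl]
        by_cases hb : b = lowE (k' + j + j) <;> by_cases hb' : b' = lowE (k' + j + j)
        · rw [if_pos ⟨hb, hb'⟩]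
          rw [Finset.sum_eq_single (lowE (k' + j))] <;>
            simp +contextual [hb, hb']
        · simp [hb, hb']
        · simp [hb]
        · simp [hb]
      · rw [if_neg hk]
        refine Finset.sum_eq_zero fun a _ => ?_
        by_cases ha : a = lowE (k + j)
        · have : ¬ (a = lowE (k' + j) ∧ b' = lowE (k' + j + j)) := by
            rintro ⟨ha', -⟩
            rw [ha, lowE_inj] at ha'
            exact hk (add_right_cancel ha'.symm)
          simp [this]
        · simp [ha]
    simp only [h2]
    simp [Finset.sum_ite_eq']
  simp only [h1]
  have h4 : ∀ k : Fin d, (b = lowE (k + j + j) ∧ b' = lowE (k + j + j)) ↔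
      (b = b' ∧ b = lowE (k + (j + j))) := by
    intro k
    rw [add_assoc]
    constructor
    · rintro ⟨u, v⟩; exact ⟨u.trans v.symm, u⟩
    · rintro ⟨u, v⟩; exact ⟨v, u ▸ v⟩
  simp only [h4]
  by_cases hbb : b = b'
  · subst hbb
    simp only [true_and]
    rw [sum_ite_lowE_shift b (j + j) (fun k => ρ k k)]
  · simp [hbb]

-- sum over i of the MA ptrB term

lemma sum_ptrB_MA (ρ : Matrix (Fin d) (Fin d) ℂ) (a a' : Fin (2*d)) :
    (∑ i : Fin d, if (a:ℕ) < d ∧ (a':ℕ) < d then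
      eps d i (res a) * ρ (res a) (res a') * star (eps d i (res a')) else 0)
    = if a = a' ∧ (a:ℕ) < d then (d:ℂ) * ρ (res a) (res a) else 0 := by
  by_cases h : (a:ℕ) < d ∧ (a':ℕ) < d
  · simp only [h, and_self, if_true, and_true]
    have hh : ∀ i : Fin d, eps d i (res a) * ρ (res a) (res a') * star (eps d i (res a'))
        = ρ (res a) (res a') * (eps d i (res a) * star (eps d i (res a'))) := fun i => by ring
    simp only [hh, ← Finset.mul_sum]
    rw [sum_eps_mul_star]
    have hres : res a = res a' ↔ a = a' := by
      constructor
      · intro hr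
        have := lowE_eq_iff a (res a)
        have e1 : a = lowE (res a) := (lowE_eq_iff a (res a)).mpr ⟨h.1, rfl⟩
        have e2 : a' = lowE (res a') := (lowE_eq_iff a' (res a')).mpr ⟨h.2, rfl⟩
        rw [e1, e2, hr]
      · intro hr; rw [hr]
    by_cases he : a = a'
    · rw [if_pos (hres.mpr he), if_pos he, he]
      ring
    · rw [if_neg (fun hc => he (hres.mp hc)), if_neg he, mul_zero]
  · simp only [if_neg h, Finset.sum_const_zero]
    exact (if_neg (fun hc : a = a' ∧ (a:ℕ) < d => h ⟨hc.2, by rw [← hc.1]; exact hc.2⟩)).symm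

lemma sum_ite_highE (a : Fin (2*d)) (f : Fin d → ℂ) :
    (∑ i, if a = highE i then f i else 0) = if d ≤ (a:ℕ) then f (res a) else 0 := by
  by_cases h : d ≤ (a:ℕ) <;> simp [highE_eq_iff, h, Finset.sum_ite_eq']

lemma sum_ptrB_MB (t : ℂ) (a a' : Fin (2*d)) :
    (∑ i : Fin d, if a = highE i ∧ a' = highE i then t else 0)
    = if a = a' ∧ d ≤ (a:ℕ) then t else 0 := by
  by_cases he : a = a'
  · subst he
    simp only [and_self, true_and]
    rw [sum_ite_highE a (fun _ => t)]
  · rw [if_neg (fun hc => he hc.1)]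
    refine Finset.sum_eq_zero fun i _ => ?_
    rw [if_neg (fun hc => he (hc.1.trans hc.2.symm))]

lemma sum_shift_diag (ρ : Matrix (Fin d) (Fin d) ℂ) (r : Fin d) :
    (∑ j ∈ Finset.univ.erase (0 : Fin d), ρ (r - j) (r - j)) = ρ.trace - ρ r r := by
  have key := Finset.sum_nbij' (s := Finset.univ.erase (0 : Fin d))
    (t := Finset.univ.erase r)
    (f := fun j => ρ (r - j) (r - j)) (g := fun m => ρ m m)
    (fun j => r - j) (fun m => r - m)
    (fun j hj => by
      simp only [Finset.mem_erase, Finset.mem_univ, and_true] at *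
      intro hcon; exact hj (by rwa [sub_eq_self] at hcon))
    (fun m hm => by
      simp only [Finset.mem_erase, Finset.mem_univ, and_true] at *
      intro hcon; exact hm (sub_eq_zero.mp hcon).symm)
    (fun j _ => sub_sub_cancel r j) (fun m _ => sub_sub_cancel r m) (fun j _ => rfl)
  rw [key, Finset.sum_erase_eq_sub (Finset.mem_univ r)]
  rfl

open Fin.NatCast in
lemma two_mul_cast_half (hodd : Odd d) :
    ((((d+1)/2 : ℕ) : Fin d)) + (((d+1)/2 : ℕ) : Fin d) = 1 := by
  have h2 : (d+1)/2 + (d+1)/2 = d + 1 := by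
    obtain ⟨m, hm⟩ := hodd; omega
  rw [← Nat.cast_add, h2, Nat.cast_add, Fin.natCast_self, Nat.cast_one, zero_add]

open Fin.NatCast Fin.CommRing in
lemma sum_shift2_diag (hodd : Odd d) (ρ : Matrix (Fin d) (Fin d) ℂ) (r : Fin d) :
    (∑ j ∈ Finset.univ.erase (0 : Fin d), ρ (r - (j+j)) (r - (j+j))) = ρ.trace - ρ r r := by
  set c : Fin d := (((d+1)/2 : ℕ) : Fin d) with hc
  have hcc : c + c = 1 := two_mul_cast_half hodd
  have hdouble : ∀ x : Fin d, c * (x + x) = x := by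
    intro x
    have : c * (x + x) = (c + c) * x := by ring
    rw [this, hcc, one_mul]
  have key := Finset.sum_nbij' (s := Finset.univ.erase (0 : Fin d))
    (t := Finset.univ.erase r)
    (f := fun j => ρ (r - (j+j)) (r - (j+j))) (g := fun m => ρ m m)
    (fun j => r - (j+j)) (fun m => c * (r - m))
    (fun j hj => by
      simp only [Finset.mem_erase, Finset.mem_univ, and_true] at *
      intro hce
      rw [sub_eq_self] at hce
      exact hj (by rw [← hdouble j, hce, mul_zero])
    )
    (fun m hm => by
      simp only [Finset.mem_erase, Finset.mem_univ, and_true] at *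
      intro hce
      apply hm
      have h1 : r - m = 0 := by
        calc r - m = (c + c) * (r - m) := by rw [hcc, one_mul]
        _ = c * (r - m) + c * (r - m) := by ring
        _ = 0 := by rw [hce]; ring
      rw [sub_eq_zero] at h1
      exact h1.symm)
    (fun j _ => by
      show c * (r - (r - (j + j))) = j
      rw [sub_sub_cancel, hdouble])
    (fun m _ => by
      show r - (c * (r - m) + c * (r - m)) = m
      have h1 : c * (r - m) + c * (r - m) = (c + c) * (r - m) := by ring
      rw [h1, hcc, one_mul, sub_sub_cancel])
    (fun j _ => rfl)
  rw [key, Finset.sum_erase_eq_sub (Finset.mem_univ r)]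
  rfl

end Helpers

noncomputable def sigmaMask (d : ℕ) : Matrix (Fin (2*d)) (Fin (2*d)) ℂ :=
  fun a b => if a = b then
    (if (a:ℕ) < d then ((d:ℂ)+1)⁻¹ else ((d:ℂ)*((d:ℂ)+1))⁻¹) else 0

/-- The explicit qudit masker (odd d): the random application of the
bipartite embeddings M_{A,i}, M_{B,i} (probability 1/(d(d+1)) each) and M_j
(probability 1/(d+1) each) has constant partial traces. -/
theorem explicit_qudit_masker (d : ℕ) [NeZero d] (hodd : Odd d) (hd : 3 ≤ d) :
    ∃ (σA σB : Matrix (Fin (2 * d)) (Fin (2 * d)) ℂ),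
      ∀ ρ : Matrix (Fin d) (Fin d) ℂ, IsDensity ρ →
        ptrB (∑ i : Fin d, ((d : ℂ) * ((d : ℂ) + 1))⁻¹ •
                (MAmat d i * ρ * (MAmat d i)ᴴ + MBmat d i * ρ * (MBmat d i)ᴴ) +
              ∑ j ∈ Finset.univ.erase (0 : Fin d), ((d : ℂ) + 1)⁻¹ •
                (Mjmat d j * ρ * (Mjmat d j)ᴴ)) = σA ∧
        ptrA (∑ i : Fin d, ((d : ℂ) * ((d : ℂ) + 1))⁻¹ •
                (MAmat d i * ρ * (MAmat d i)ᴴ + MBmat d i * ρ * (MBmat d i)ᴴ) +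
              ∑ j ∈ Finset.univ.erase (0 : Fin d), ((d : ℂ) + 1)⁻¹ •
                (Mjmat d j * ρ * (Mjmat d j)ᴴ)) = σB := by
  classical
  have hd0 : (d:ℂ) ≠ 0 := Nat.cast_ne_zero.mpr (NeZero.ne d)
  have hd1 : (d:ℂ) + 1 ≠ 0 := by
    have h : ((d:ℂ) + 1) = ((d+1 : ℕ) : ℂ) := by push_cast; ring
    rw [h]
    exact Nat.cast_ne_zero.mpr (by omega)
  refine ⟨sigmaMask d, sigmaMask d, fun ρ hρ => ⟨?_, ?_⟩⟩
  · ext a a'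
    simp only [ptrB, Matrix.sum_apply, Matrix.add_apply, Matrix.smul_apply, smul_eq_mul]
    rw [Finset.sum_add_distrib]
    have h1 : (∑ b : Fin (2*d), ∑ i : Fin d,
        ((d : ℂ) * ((d : ℂ) + 1))⁻¹ * ((MAmat d i * ρ * (MAmat d i)ᴴ) (a,b) (a',b)
            + (MBmat d i * ρ * (MBmat d i)ᴴ) (a,b) (a',b)))
        = ((d : ℂ) * ((d : ℂ) + 1))⁻¹ *
            ((if a = a' ∧ (a:ℕ) < d then (d:ℂ) * ρ (res a) (res a) else 0)
              + (if a = a' ∧ d ≤ (a:ℕ) then ρ.trace else 0)) := by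
      rw [Finset.sum_comm]
      have hi : ∀ i : Fin d, (∑ b : Fin (2*d),
          ((d : ℂ) * ((d : ℂ) + 1))⁻¹ * ((MAmat d i * ρ * (MAmat d i)ᴴ) (a,b) (a',b)
              + (MBmat d i * ρ * (MBmat d i)ᴴ) (a,b) (a',b)))
          = ((d : ℂ) * ((d : ℂ) + 1))⁻¹ * ((if (a:ℕ) < d ∧ (a':ℕ) < d then
              eps d i (res a) * ρ (res a) (res a') * star (eps d i (res a')) else 0)
            + (if a = highE i ∧ a' = highE i then ρ.trace else 0)) := by
        intro i
        rw [← Finset.mul_sum, Finset.sum_add_distrib, ptrB_MA, ptrB_MB]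
      simp only [hi]
      rw [← Finset.mul_sum, Finset.sum_add_distrib, sum_ptrB_MA, sum_ptrB_MB]
    have h2 : (∑ b : Fin (2*d), ∑ j ∈ Finset.univ.erase (0 : Fin d),
        ((d : ℂ) + 1)⁻¹ * (Mjmat d j * ρ * (Mjmat d j)ᴴ) (a,b) (a',b))
        = ((d : ℂ) + 1)⁻¹ *
            (if a = a' ∧ (a:ℕ) < d then ρ.trace - ρ (res a) (res a) else 0) := by
      rw [Finset.sum_comm]
      simp only [← Finset.mul_sum]
      congr 1
      have hj : ∀ j : Fin d, (∑ b : Fin (2*d), (Mjmat d j * ρ * (Mjmat d j)ᴴ) (a,b) (a',b))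
          = if a = a' ∧ (a:ℕ) < d then ρ (res a - j) (res a - j) else 0 :=
        fun j => ptrB_Mj j ρ a a'
      simp only [hj]
      by_cases hcond : a = a' ∧ (a:ℕ) < d
      · obtain ⟨heq, hlt2⟩ := hcond
        subst heq
        simp only [hlt2, and_self, true_and, eq_self_iff_true, if_true]
        exact sum_shift_diag ρ (res a)
      · simp [hcond]
    rw [h1, h2, hρ.2, sigmaMask]
    by_cases haa : a = a'
    · subst haa
      by_cases hlt : (a:ℕ) < d
      · have hnle : ¬ d ≤ (a:ℕ) := by omega
        simp only [hlt, hnle, and_true, and_false, true_and, and_self, if_true, if_false,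
          eq_self_iff_true]
        rw [add_zero, mul_inv]
        set r : ℂ := ρ (res a) (res a) with hr
        rw [show ((d:ℂ))⁻¹*(((d:ℂ))+1)⁻¹*(((d:ℂ))*r) = (((d:ℂ))*((d:ℂ))⁻¹)*((((d:ℂ))+1)⁻¹*r) from by ring,
          mul_inv_cancel₀ hd0, one_mul]
        ring
      · have hle : d ≤ (a:ℕ) := Nat.le_of_not_lt hlt
        simp only [hlt, hle, and_true, and_false, true_and, and_self, if_true, if_false,
          eq_self_iff_true]
        ring
    · simp [haa]
  · ext b b'
    simp only [ptrA, Matrix.sum_apply, Matrix.add_apply, Matrix.smul_apply, smul_eq_mul]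
    rw [Finset.sum_add_distrib]
    have h1 : (∑ a : Fin (2*d), ∑ i : Fin d,
        ((d : ℂ) * ((d : ℂ) + 1))⁻¹ * ((MAmat d i * ρ * (MAmat d i)ᴴ) (a,b) (a,b')
            + (MBmat d i * ρ * (MBmat d i)ᴴ) (a,b) (a,b')))
        = ((d : ℂ) * ((d : ℂ) + 1))⁻¹ *
            ((if b = b' ∧ d ≤ (b:ℕ) then ρ.trace else 0)
              + (if b = b' ∧ (b:ℕ) < d then (d:ℂ) * ρ (res b) (res b) else 0)) := by
      rw [Finset.sum_comm]
      have hi : ∀ i : Fin d, (∑ a : Fin (2*d),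
          ((d : ℂ) * ((d : ℂ) + 1))⁻¹ * ((MAmat d i * ρ * (MAmat d i)ᴴ) (a,b) (a,b')
              + (MBmat d i * ρ * (MBmat d i)ᴴ) (a,b) (a,b')))
          = ((d : ℂ) * ((d : ℂ) + 1))⁻¹ *
            ((if b = highE i ∧ b' = highE i then ρ.trace else 0)
            + (if (b:ℕ) < d ∧ (b':ℕ) < d then
              eps d i (res b) * ρ (res b) (res b') * star (eps d i (res b')) else 0)) := by
        intro i
        rw [← Finset.mul_sum, Finset.sum_add_distrib, ptrA_MA, ptrA_MB]
      simp only [hi]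
      rw [← Finset.mul_sum, Finset.sum_add_distrib, sum_ptrB_MA, sum_ptrB_MB]
    have h2 : (∑ a : Fin (2*d), ∑ j ∈ Finset.univ.erase (0 : Fin d),
        ((d : ℂ) + 1)⁻¹ * (Mjmat d j * ρ * (Mjmat d j)ᴴ) (a,b) (a,b'))
        = ((d : ℂ) + 1)⁻¹ *
            (if b = b' ∧ (b:ℕ) < d then ρ.trace - ρ (res b) (res b) else 0) := by
      rw [Finset.sum_comm]
      simp only [← Finset.mul_sum]
      congr 1
      have hj : ∀ j : Fin d, (∑ a : Fin (2*d), (Mjmat d j * ρ * (Mjmat d j)ᴴ) (a,b) (a,b'))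
          = if b = b' ∧ (b:ℕ) < d then ρ (res b - (j+j)) (res b - (j+j)) else 0 :=
        fun j => ptrA_Mj j ρ b b'
      simp only [hj]
      by_cases hcond : b = b' ∧ (b:ℕ) < d
      · obtain ⟨heq, hlt2⟩ := hcond
        subst heq
        simp only [hlt2, and_self, true_and, eq_self_iff_true, if_true]
        exact sum_shift2_diag hodd ρ (res b)
      · simp [hcond]
    rw [h1, h2, hρ.2, sigmaMask]
    by_cases hbb : b = b'
    · subst hbb
      by_cases hlt : (b:ℕ) < d
      · have hnle : ¬ d ≤ (b:ℕ) := by omega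
        simp only [hlt, hnle, and_true, and_false, true_and, and_self, if_true, if_false,
          eq_self_iff_true]
        rw [zero_add, mul_inv]
        set r : ℂ := ρ (res b) (res b) with hr
        rw [show ((d:ℂ))⁻¹*(((d:ℂ))+1)⁻¹*(((d:ℂ))*r) = (((d:ℂ))*((d:ℂ))⁻¹)*((((d:ℂ))+1)⁻¹*r) from by ring,
          mul_inv_cancel₀ hd0, one_mul]
        ring
      · have hle : d ≤ (b:ℕ) := Nat.le_of_not_lt hlt
        simp only [hlt, hle, and_true, and_false, true_and, and_self, if_true, if_false,
          eq_self_iff_true]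
        ring
    · simp [hbb]
end
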